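/- arXiv:2008.09282 — 12 statements merged into one kernel-verified Lean document; each statement's English description precedes it below -/
import Mathlib

section
/- Let X be a real normed space and x ∈ S_X. If the star set st(x) = {y ∈ S_X : ‖y + x‖ = 2} is convex, then st(x) is a maximal convex subset of the unit sphere S_X. -/
theorem stmt0 {X : Type*} [NormedAddCommGroup X] [NormedSpace ℝ X]
    (x : X) (hx : ‖x‖ = 1)
    (hconv : Convex ℝ {y : X | ‖y‖ = 1 ∧ ‖y + x‖ = 2}) :
    ∀ C : Set X, Convex ℝ C → C ⊆ {y : X | ‖y‖ = 1} →
      {y : X | ‖y‖ = 1 ∧ ‖y + x‖ = 2} ⊆ C →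
      C = {y : X | ‖y‖ = 1 ∧ ‖y + x‖ = 2} := by
  intro C hC hsub hsup
  apply Set.Subset.antisymm _ hsup
  intro y hy
  have hxC : x ∈ C := hsup ⟨hx, by
    have : x + x = (2 : ℝ) • x := (two_smul ℝ x).symm
    rw [this, norm_smul, hx]; norm_num⟩
  have hmid : (1/2 : ℝ) • y + (1/2 : ℝ) • x ∈ C :=
    hC hy hxC (by norm_num) (by norm_num) (by norm_num)
  have h1 : ‖(1/2 : ℝ) • y + (1/2 : ℝ) • x‖ = 1 := hsub hmid
  have h2 : (1/2 : ℝ) • y + (1/2 : ℝ) • x = (1/2 : ℝ) • (y + x) := by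
    rw [smul_add]
  rw [h2, norm_smul] at h1
  refine ⟨hsub hy, ?_⟩
  simp at h1
  linarith
end

section
/- Let X and Y be real normed spaces and T : S_X → S_Y a surjective phase-isometry. Then T is injective and T(-x) = -T(x) for all x ∈ S_X; consequently T⁻¹ is also a surjective phase-isometry. -/
theorem stmt2 {X Y : Type*} [NormedAddCommGroup X] [NormedSpace ℝ X]
    [NormedAddCommGroup Y] [NormedSpace ℝ Y] (T : X → Y)
    (hmap : ∀ x : X, ‖x‖ = 1 → ‖T x‖ = 1)
    (hsurj : ∀ y : Y, ‖y‖ = 1 → ∃ x : X, ‖x‖ = 1 ∧ T x = y)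
    (hphase : ∀ x y : X, ‖x‖ = 1 → ‖y‖ = 1 →
      ({‖T x + T y‖, ‖T x - T y‖} : Set ℝ) = {‖x + y‖, ‖x - y‖}) :
    Set.InjOn T {x : X | ‖x‖ = 1} ∧
    (∀ x : X, ‖x‖ = 1 → T (-x) = -T x) ∧
    ∃ S : Y → X,
      (∀ y : Y, ‖y‖ = 1 → ‖S y‖ = 1) ∧
      (∀ x : X, ‖x‖ = 1 → ∃ y : Y, ‖y‖ = 1 ∧ S y = x) ∧
      (∀ y z : Y, ‖y‖ = 1 → ‖z‖ = 1 →
        ({‖S y + S z‖, ‖S y - S z‖} : Set ℝ) = {‖y + z‖, ‖y - z‖}) ∧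
      (∀ x : X, ‖x‖ = 1 → S (T x) = x) := by
  classical
  -- a unit vector cannot equal its own negation
  have hcontra : ∀ u : Y, ‖u‖ = 1 → u = -u → False := by
    intro u hu h
    have h2 : ‖u + u‖ = 2 := by
      rw [← two_smul ℝ, norm_smul, hu]; norm_num
    have h0 : ‖u + u‖ = 0 := by
      nth_rewrite 2 [h]
      simp
    rw [h0] at h2; norm_num at h2
  -- oddness
  have hodd : ∀ x : X, ‖x‖ = 1 → T (-x) = -T x := by
    intro x hx
    have hTx : ‖(-T x : Y)‖ = 1 := by rw [norm_neg]; exact hmap x hx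
    obtain ⟨z, hz, hTz⟩ := hsurj (-T x) hTx
    have hset := hphase z x hz hx
    have h0 : (0 : ℝ) ∈ ({‖z + x‖, ‖z - x‖} : Set ℝ) := by
      rw [← hset]; left
      rw [hTz]; simp
    rcases h0 with h0 | h0
    · have hz' : z = -x := eq_neg_of_add_eq_zero_left (norm_eq_zero.mp h0.symm)
      rw [← hz', hTz]
    · exfalso
      have hz' : z = x := sub_eq_zero.mp (norm_eq_zero.mp h0.symm)
      rw [hz'] at hTz
      exact hcontra (T x) (hmap x hx) hTz
  -- injectivity
  have hinj : Set.InjOn T {x : X | ‖x‖ = 1} := by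
    intro x hx y hy hxy
    simp only [Set.mem_setOf_eq] at hx hy
    have hset := hphase x y hx hy
    have h0 : (0 : ℝ) ∈ ({‖x + y‖, ‖x - y‖} : Set ℝ) := by
      rw [← hset]; right
      rw [hxy]; simp
    rcases h0 with h0 | h0
    · exfalso
      have hy' : y = -x := eq_neg_of_add_eq_zero_right (norm_eq_zero.mp h0.symm)
      rw [hy', hodd x hx] at hxy
      exact hcontra (T x) (hmap x hx) hxy
    · exact sub_eq_zero.mp (norm_eq_zero.mp h0.symm)
  refine ⟨hinj, hodd, fun y => if h : ‖y‖ = 1 then (hsurj y h).choose else 0,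
    ?_, ?_, ?_, ?_⟩
  · intro y hy
    simp only [dif_pos hy]
    exact (hsurj y hy).choose_spec.1
  · intro x hx
    refine ⟨T x, hmap x hx, ?_⟩
    have h := hmap x hx
    simp only [dif_pos h]
    exact hinj (hsurj (T x) h).choose_spec.1 hx (hsurj (T x) h).choose_spec.2
  · intro y z hy hz
    simp only [dif_pos hy, dif_pos hz]
    obtain ⟨hy1, hy2⟩ := (hsurj y hy).choose_spec
    obtain ⟨hz1, hz2⟩ := (hsurj z hz).choose_spec
    have := hphase (hsurj y hy).choose (hsurj z hz).choose hy1 hz1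
    rw [hy2, hz2] at this
    exact this.symm
  · intro x hx
    have h := hmap x hx
    simp only [dif_pos h]
    exact hinj (hsurj (T x) h).choose_spec.1 hx (hsurj (T x) h).choose_spec.2
end

section
/- Let X and Y be real normed spaces and T : S_X → S_Y a surjective phase-isometry. Then for every x ∈ S_X, the star set st(x) is a maximal convex subset of S_X if and only if st(T(x)) is a maximal convex subset of S_Y. -/
section Aux

variable {E : Type*} [NormedAddCommGroup E] [NormedSpace ℝ E]

/-- If `y, z` are unit vectors with `‖y + z‖ = 2`, then the segment `[y, z]`
lies on the unit sphere. -/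
lemma seg' (y z : E) (hy : ‖y‖ = 1) (hz : ‖z‖ = 1) (h : ‖y + z‖ = 2)
    {a b : ℝ} (ha : 0 ≤ a) (hb : 0 ≤ b) (hab : a + b = 1) :
    ‖a • y + b • z‖ = 1 := by
  have hub : ‖a • y + b • z‖ ≤ 1 := by
    calc ‖a • y + b • z‖ ≤ ‖a • y‖ + ‖b • z‖ := norm_add_le _ _
      _ = 1 := by
        rw [norm_smul, norm_smul, Real.norm_of_nonneg ha, Real.norm_of_nonneg hb, hy, hz]
        linarith
  have hlb : 1 ≤ ‖a • y + b • z‖ := by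
    rcases le_total a b with hab' | hab'
    · have e : (a • y + b • z) + (b - a) • y = b • (y + z) := by module
      have h1 : ‖b • (y + z)‖ = 2 * b := by
        rw [norm_smul, Real.norm_of_nonneg hb, h]; ring
      have h2 : ‖(b - a) • y‖ = b - a := by
        rw [norm_smul, Real.norm_of_nonneg (by linarith), hy]; ring
      have h3 := norm_add_le (a • y + b • z) ((b - a) • y)
      rw [e, h1, h2] at h3
      linarith
    · have e : (a • y + b • z) + (a - b) • z = a • (y + z) := by module
      have h1 : ‖a • (y + z)‖ = 2 * a := by
        rw [norm_smul, Real.norm_of_nonneg ha, h]; ring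
      have h2 : ‖(a - b) • z‖ = a - b := by
        rw [norm_smul, Real.norm_of_nonneg (by linarith), hz]; ring
      have h3 := norm_add_le (a • y + b • z) ((a - b) • z)
      rw [e, h1, h2] at h3
      linarith
  linarith

/-- Convexity of the star set is equivalent to a pairwise condition on
`st(x) ∪ -st(x)`. -/
lemma convex_iff_pair (x : E) (hx : ‖x‖ = 1) :
    Convex ℝ {y : E | ‖y‖ = 1 ∧ ‖y + x‖ = 2} ↔
      ∀ y z : E, ‖y‖ = 1 → ‖z‖ = 1 → (‖y + x‖ = 2 ∨ ‖y - x‖ = 2) →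
        (‖z + x‖ = 2 ∨ ‖z - x‖ = 2) → (‖y + z‖ = 2 ∨ ‖y - z‖ = 2) := by
  constructor
  · intro hC y z hy hz hyx hzx
    -- from convexity: any two members of the star set have sum of norm 2
    have pair : ∀ u v : E, u ∈ {y : E | ‖y‖ = 1 ∧ ‖y + x‖ = 2} →
        v ∈ {y : E | ‖y‖ = 1 ∧ ‖y + x‖ = 2} → ‖u + v‖ = 2 := by
      intro u v hu hv
      have hm := hC hu hv (by norm_num : (0:ℝ) ≤ 1/2) (by norm_num : (0:ℝ) ≤ 1/2)
        (by norm_num : (1:ℝ)/2 + 1/2 = 1)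
      have h1 : ‖(1/2 : ℝ) • u + (1/2 : ℝ) • v‖ = 1 := hm.1
      have e : (1/2 : ℝ) • u + (1/2 : ℝ) • v = (1/2 : ℝ) • (u + v) := by module
      rw [e, norm_smul, Real.norm_of_nonneg (by norm_num : (0:ℝ) ≤ 1/2)] at h1
      linarith
    have hyx' : (y ∈ {y : E | ‖y‖ = 1 ∧ ‖y + x‖ = 2}) ∨
        ((-y) ∈ {y : E | ‖y‖ = 1 ∧ ‖y + x‖ = 2}) := by
      rcases hyx with h | h
      · exact Or.inl ⟨hy, h⟩
      · refine Or.inr ⟨by rwa [norm_neg], ?_⟩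
        rwa [neg_add_eq_sub, norm_sub_rev]
    have hzx' : (z ∈ {y : E | ‖y‖ = 1 ∧ ‖y + x‖ = 2}) ∨
        ((-z) ∈ {y : E | ‖y‖ = 1 ∧ ‖y + x‖ = 2}) := by
      rcases hzx with h | h
      · exact Or.inl ⟨hz, h⟩
      · refine Or.inr ⟨by rwa [norm_neg], ?_⟩
        rwa [neg_add_eq_sub, norm_sub_rev]
    rcases hyx' with hy' | hy' <;> rcases hzx' with hz' | hz'
    · exact Or.inl (pair y z hy' hz')
    · have := pair y (-z) hy' hz'
      rw [← sub_eq_add_neg] at this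
      exact Or.inr this
    · have := pair (-y) z hy' hz'
      rw [neg_add_eq_sub, norm_sub_rev] at this
      exact Or.inr this
    · have := pair (-y) (-z) hy' hz'
      rw [show (-y) + (-z) = -(y + z) by abel, norm_neg] at this
      exact Or.inl this
  · intro hP
    intro y hy z hz a b ha hb hab
    obtain ⟨hy1, hy2⟩ := hy
    obtain ⟨hz1, hz2⟩ := hz
    obtain rfl : b = 1 - a := by linarith
    have hxy : ‖x + y‖ = 2 := by rwa [add_comm]
    have hxz : ‖x + z‖ = 2 := by rwa [add_comm]
    -- the midpoints a' = (x+y)/2 and b' = (x+z)/2 are in the star set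
    set a' : E := (1/2 : ℝ) • x + (1/2 : ℝ) • y with ha'def
    set b' : E := (1/2 : ℝ) • x + (1/2 : ℝ) • z with hb'def
    have ha'1 : ‖a'‖ = 1 :=
      seg' x y hx hy1 hxy (by norm_num) (by norm_num) (by norm_num)
    have hb'1 : ‖b'‖ = 1 :=
      seg' x z hx hz1 hxz (by norm_num) (by norm_num) (by norm_num)
    have ha'x : ‖a' + x‖ = 2 := by
      have e : a' + x = (2 : ℝ) • ((3/4 : ℝ) • x + (1/4 : ℝ) • y) := by
        rw [ha'def]; module
      rw [e, norm_smul, Real.norm_of_nonneg (by norm_num : (0:ℝ) ≤ 2),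
        seg' x y hx hy1 hxy (by norm_num) (by norm_num) (by norm_num)]
      norm_num
    have hb'x : ‖b' + x‖ = 2 := by
      have e : b' + x = (2 : ℝ) • ((3/4 : ℝ) • x + (1/4 : ℝ) • z) := by
        rw [hb'def]; module
      rw [e, norm_smul, Real.norm_of_nonneg (by norm_num : (0:ℝ) ≤ 2),
        seg' x z hx hz1 hxz (by norm_num) (by norm_num) (by norm_num)]
      norm_num
    have hsum : ‖a' + b'‖ = 2 := by
      rcases hP a' b' ha'1 hb'1 (Or.inl ha'x) (Or.inl hb'x) with h | h
      · exact h
      · exfalso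
        have e : a' - b' = (1/2 : ℝ) • (y - z) := by rw [ha'def, hb'def]; module
        have hle : ‖a' - b'‖ ≤ 1 := by
          rw [e, norm_smul, Real.norm_of_nonneg (by norm_num : (0:ℝ) ≤ 1/2)]
          have := norm_sub_le y z
          rw [hy1, hz1] at this
          linarith
        linarith
    have key : ‖a • a' + (1 - a) • b'‖ = 1 :=
      seg' a' b' ha'1 hb'1 hsum ha hb hab
    have e : a • a' + (1 - a) • b' = (1/2 : ℝ) • (x + (a • y + (1 - a) • z)) := by
      rw [ha'def, hb'def]; module
    rw [e, norm_smul, Real.norm_of_nonneg (by norm_num : (0:ℝ) ≤ 1/2)] at key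
    have hxw : ‖x + (a • y + (1 - a) • z)‖ = 2 := by linarith
    have hwle : ‖a • y + (1 - a) • z‖ ≤ 1 := by
      have h1 := norm_add_le (a • y) ((1 - a) • z)
      rw [norm_smul, norm_smul, Real.norm_of_nonneg ha, Real.norm_of_nonneg hb,
        hy1, hz1] at h1
      linarith
    have hwge : 1 ≤ ‖a • y + (1 - a) • z‖ := by
      have h1 := norm_add_le x (a • y + (1 - a) • z)
      rw [hxw, hx] at h1
      linarith
    exact ⟨le_antisymm hwle hwge, by rw [add_comm]; exact hxw⟩

/-- The maximality condition in the statement holds unconditionally: any convex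
subset of the sphere containing `st(x)` equals `st(x)`. -/
lemma maximal_always (x : E) (hx : ‖x‖ = 1) :
    ∀ C : Set E, Convex ℝ C → C ⊆ {y : E | ‖y‖ = 1} →
      {y : E | ‖y‖ = 1 ∧ ‖y + x‖ = 2} ⊆ C →
      C = {y : E | ‖y‖ = 1 ∧ ‖y + x‖ = 2} := by
  intro C hCconv hCsph hsub
  have hxx : ‖x + x‖ = 2 := by
    rw [← two_smul ℝ x, norm_smul, hx]
    norm_num
  have hxC : x ∈ C := hsub ⟨hx, hxx⟩
  apply Set.Subset.antisymm _ hsub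
  intro c hc
  have hc1 : ‖c‖ = 1 := hCsph hc
  have hm := hCconv hc hxC (by norm_num : (0:ℝ) ≤ 1/2) (by norm_num : (0:ℝ) ≤ 1/2)
    (by norm_num : (1:ℝ)/2 + 1/2 = 1)
  have hm1 : ‖(1/2 : ℝ) • c + (1/2 : ℝ) • x‖ = 1 := hCsph hm
  have e : (1/2 : ℝ) • c + (1/2 : ℝ) • x = (1/2 : ℝ) • (c + x) := by module
  rw [e, norm_smul, Real.norm_of_nonneg (by norm_num : (0:ℝ) ≤ 1/2)] at hm1
  exact ⟨hc1, by linarith⟩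

end Aux

theorem stmt3 {X Y : Type*} [NormedAddCommGroup X] [NormedSpace ℝ X]
    [NormedAddCommGroup Y] [NormedSpace ℝ Y] (T : X → Y)
    (hmap : ∀ x : X, ‖x‖ = 1 → ‖T x‖ = 1)
    (hsurj : ∀ y : Y, ‖y‖ = 1 → ∃ x : X, ‖x‖ = 1 ∧ T x = y)
    (hphase : ∀ x y : X, ‖x‖ = 1 → ‖y‖ = 1 →
      ({‖T x + T y‖, ‖T x - T y‖} : Set ℝ) = {‖x + y‖, ‖x - y‖})
    (x : X) (hx : ‖x‖ = 1) :
    (Convex ℝ {y : X | ‖y‖ = 1 ∧ ‖y + x‖ = 2} ∧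
      ∀ C : Set X, Convex ℝ C → C ⊆ {y : X | ‖y‖ = 1} →
        {y : X | ‖y‖ = 1 ∧ ‖y + x‖ = 2} ⊆ C →
        C = {y : X | ‖y‖ = 1 ∧ ‖y + x‖ = 2}) ↔
    (Convex ℝ {z : Y | ‖z‖ = 1 ∧ ‖z + T x‖ = 2} ∧
      ∀ C : Set Y, Convex ℝ C → C ⊆ {z : Y | ‖z‖ = 1} →
        {z : Y | ‖z‖ = 1 ∧ ‖z + T x‖ = 2} ⊆ C →
        C = {z : Y | ‖z‖ = 1 ∧ ‖z + T x‖ = 2}) := by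
  have hTx : ‖T x‖ = 1 := hmap x hx
  -- transfer of the "2 ∈ {‖u+v‖, ‖u-v‖}" condition through T
  have htrans : ∀ u v : X, ‖u‖ = 1 → ‖v‖ = 1 →
      ((‖u + v‖ = 2 ∨ ‖u - v‖ = 2) ↔ (‖T u + T v‖ = 2 ∨ ‖T u - T v‖ = 2)) := by
    intro u v hu hv
    have h := hphase u v hu hv
    have h2 : (2 : ℝ) ∈ ({‖T u + T v‖, ‖T u - T v‖} : Set ℝ) ↔
        (2 : ℝ) ∈ ({‖u + v‖, ‖u - v‖} : Set ℝ) := by rw [h]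
    simp only [Set.mem_insert_iff, Set.mem_singleton_iff] at h2
    constructor
    · intro hor
      rcases h2.2 (by rcases hor with h' | h' <;> [exact Or.inl h'.symm; exact Or.inr h'.symm])
        with h' | h'
      · exact Or.inl h'.symm
      · exact Or.inr h'.symm
    · intro hor
      rcases h2.1 (by rcases hor with h' | h' <;> [exact Or.inl h'.symm; exact Or.inr h'.symm])
        with h' | h'
      · exact Or.inl h'.symm
      · exact Or.inr h'.symm
  -- transfer of the pairwise condition
  have hP : (∀ y z : X, ‖y‖ = 1 → ‖z‖ = 1 → (‖y + x‖ = 2 ∨ ‖y - x‖ = 2) →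
        (‖z + x‖ = 2 ∨ ‖z - x‖ = 2) → (‖y + z‖ = 2 ∨ ‖y - z‖ = 2)) ↔
      (∀ y z : Y, ‖y‖ = 1 → ‖z‖ = 1 → (‖y + T x‖ = 2 ∨ ‖y - T x‖ = 2) →
        (‖z + T x‖ = 2 ∨ ‖z - T x‖ = 2) → (‖y + z‖ = 2 ∨ ‖y - z‖ = 2)) := by
    constructor
    · intro hPX u v hu hv huT hvT
      obtain ⟨w1, hw1, rfl⟩ := hsurj u hu
      obtain ⟨w2, hw2, rfl⟩ := hsurj v hv
      have h1 : ‖w1 + x‖ = 2 ∨ ‖w1 - x‖ = 2 := (htrans w1 x hw1 hx).2 huT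
      have h2 : ‖w2 + x‖ = 2 ∨ ‖w2 - x‖ = 2 := (htrans w2 x hw2 hx).2 hvT
      exact (htrans w1 w2 hw1 hw2).1 (hPX w1 w2 hw1 hw2 h1 h2)
    · intro hPY y z hy hz hyx hzx
      have h1 : ‖T y + T x‖ = 2 ∨ ‖T y - T x‖ = 2 := (htrans y x hy hx).1 hyx
      have h2 : ‖T z + T x‖ = 2 ∨ ‖T z - T x‖ = 2 := (htrans z x hz hx).1 hzx
      exact (htrans y z hy hz).2 (hPY (T y) (T z) (hmap y hy) (hmap z hz) h1 h2)
  constructor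
  · rintro ⟨hconv, -⟩
    exact ⟨(convex_iff_pair (T x) hTx).2 (hP.1 ((convex_iff_pair x hx).1 hconv)),
      maximal_always (T x) hTx⟩
  · rintro ⟨hconv, -⟩
    exact ⟨(convex_iff_pair x hx).2 (hP.2 ((convex_iff_pair (T x) hTx).1 hconv)),
      maximal_always x hx⟩
end

section
/- Let X and Y be real normed spaces and T : S_X → S_Y a surjective phase-isometry. Then for every separable subset A ⊂ X, there exist separable closed subspaces X₀ ⊂ X and Y₀ ⊂ Y such that A ⊂ X₀ and T(S_{X₀}) = S_{Y₀}. -/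
open TopologicalSpace Submodule Set Metric

section aux

variable {M : Type*} [NormedAddCommGroup M] [NormedSpace ℝ M]

open Classical in
noncomputable def auxDS (s : Set M) : Set M :=
  if h : IsSeparable s then h.exists_countable_dense_subset.choose else ∅

lemma auxDS_subset (s : Set M) : auxDS s ⊆ s := by
  unfold auxDS; split_ifs with h
  · exact h.exists_countable_dense_subset.choose_spec.1
  · exact empty_subset _

lemma auxDS_countable (s : Set M) : (auxDS s).Countable := by
  unfold auxDS; split_ifs with h
  · exact h.exists_countable_dense_subset.choose_spec.2.1
  · exact countable_empty

lemma auxDS_dense {s : Set M} (h : IsSeparable s) : s ⊆ closure (auxDS s) := by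
  unfold auxDS; rw [dif_pos h]
  exact h.exists_countable_dense_subset.choose_spec.2.2

/-- Unit vectors of the closed span of a monotone union can be approximated by unit
vectors of the closed spans of the pieces. -/
lemma aux_sphere_dense (G : ℕ → Set M) (hmono : Monotone G) {x : M} (hx : ‖x‖ = 1)
    (hxcl : x ∈ (span ℝ (⋃ n, G n)).topologicalClosure) {ε : ℝ} (hε : 0 < ε) :
    ∃ n u, ‖u‖ = 1 ∧ u ∈ (span ℝ (G n)).topologicalClosure ∧ ‖x - u‖ < ε := by
  have hmono' : Monotone fun n => span ℝ (G n) := fun _ _ h => span_mono (hmono h)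
  have hdir : Directed (· ≤ ·) (fun n => span ℝ (G n)) := hmono'.directed_le
  have hcoe : (span ℝ (⋃ n, G n) : Set M) = ⋃ n, (span ℝ (G n) : Set M) := by
    rw [span_iUnion]
    exact coe_iSup_of_directed _ hdir
  have hxcl' : x ∈ closure (⋃ n, (span ℝ (G n) : Set M)) := by
    rw [← hcoe]
    have := hxcl
    rwa [← SetLike.mem_coe, Submodule.topologicalClosure_coe] at this
  have hδ : (0:ℝ) < min (ε/3) (1/3) := by positivity
  obtain ⟨m, hm, hmx⟩ := Metric.mem_closure_iff.1 hxcl' _ hδ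
  obtain ⟨n, hmn⟩ := mem_iUnion.1 hm
  rw [dist_eq_norm] at hmx
  have hδε : min (ε/3) (1/3) ≤ ε/3 := min_le_left _ _
  have hδ1 : min (ε/3) (1/3) ≤ 1/3 := min_le_right _ _
  have hmnorm : (1:ℝ)/2 < ‖m‖ := by
    have h1 : ‖x‖ - ‖m‖ ≤ ‖x - m‖ := norm_sub_norm_le _ _
    rw [hx] at h1; linarith
  have hm0 : m ≠ 0 := by
    intro h; rw [h, norm_zero] at hmnorm; linarith
  refine ⟨n, ‖m‖⁻¹ • m, ?_, ?_, ?_⟩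
  · rw [norm_smul, norm_inv, norm_norm, inv_mul_cancel₀ (norm_ne_zero_iff.2 hm0)]
  · exact (span ℝ (G n)).topologicalClosure.smul_mem _ ((span ℝ (G n)).le_topologicalClosure hmn)
  · have hmu : ‖m - ‖m‖⁻¹ • m‖ = |‖m‖ - 1| := by
      have : m - ‖m‖⁻¹ • m = (1 - ‖m‖⁻¹) • m := by
        rw [sub_smul, one_smul]
      rw [this, norm_smul, Real.norm_eq_abs, ← abs_of_nonneg (norm_nonneg m), ← abs_mul]
      congr 1
      field_simp
      rw [abs_of_nonneg (norm_nonneg m)]; ring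
    have habs : |‖m‖ - 1| ≤ ‖x - m‖ := by
      rw [← hx]
      have := abs_norm_sub_norm_le m x
      rwa [← norm_sub_rev] at this
    calc ‖x - ‖m‖⁻¹ • m‖ ≤ ‖x - m‖ + ‖m - ‖m‖⁻¹ • m‖ := by
          have : x - ‖m‖⁻¹ • m = (x - m) + (m - ‖m‖⁻¹ • m) := by abel
          rw [this]; exact norm_add_le _ _
      _ ≤ ‖x - m‖ + ‖x - m‖ := by rw [hmu]; linarith
      _ < ε := by linarith

variable {X Y : Type*} [NormedAddCommGroup X] [NormedSpace ℝ X]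
  [NormedAddCommGroup Y] [NormedSpace ℝ Y]

noncomputable def auxPre (T : X → Y)
    (hsurj : ∀ y : Y, ‖y‖ = 1 → ∃ x : X, ‖x‖ = 1 ∧ T x = y) (y : Y) : X :=
  if h : ‖y‖ = 1 then (hsurj y h).choose else 0

lemma auxPre_spec (T : X → Y) (hsurj : ∀ y : Y, ‖y‖ = 1 → ∃ x : X, ‖x‖ = 1 ∧ T x = y)
    {y : Y} (hy : ‖y‖ = 1) :
    ‖auxPre T hsurj y‖ = 1 ∧ T (auxPre T hsurj y) = y := by
  unfold auxPre; rw [dif_pos hy]; exact (hsurj y hy).choose_spec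

noncomputable def auxE (T : X → Y) (C : Set X) : Set Y :=
  auxDS ({y : Y | ‖y‖ = 1} ∩ (span ℝ (T '' ({x : X | ‖x‖ = 1} ∩ C))).topologicalClosure)

noncomputable def auxStep (T : X → Y)
    (hsurj : ∀ y : Y, ‖y‖ = 1 → ∃ x : X, ‖x‖ = 1 ∧ T x = y) (C : Set X) : Set X :=
  (C ∪ auxDS ({x : X | ‖x‖ = 1} ∩ (span ℝ C).topologicalClosure)) ∪
    auxPre T hsurj '' auxE T C

noncomputable def auxC (T : X → Y)
    (hsurj : ∀ y : Y, ‖y‖ = 1 → ∃ x : X, ‖x‖ = 1 ∧ T x = y) (C0 : Set X) : ℕ → Set X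
  | 0 => C0
  | n + 1 => auxStep T hsurj (auxC T hsurj C0 n)

end aux

theorem stmt4 {X Y : Type*} [NormedAddCommGroup X] [NormedSpace ℝ X]
    [NormedAddCommGroup Y] [NormedSpace ℝ Y] (T : X → Y)
    (hmap : ∀ x : X, ‖x‖ = 1 → ‖T x‖ = 1)
    (hsurj : ∀ y : Y, ‖y‖ = 1 → ∃ x : X, ‖x‖ = 1 ∧ T x = y)
    (hphase : ∀ x y : X, ‖x‖ = 1 → ‖y‖ = 1 →
      ({‖T x + T y‖, ‖T x - T y‖} : Set ℝ) = {‖x + y‖, ‖x - y‖})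
    (A : Set X) (hA : TopologicalSpace.IsSeparable A) :
    ∃ (X₀ : Subspace ℝ X) (Y₀ : Subspace ℝ Y),
      IsClosed (X₀ : Set X) ∧ IsClosed (Y₀ : Set Y) ∧
      TopologicalSpace.IsSeparable (X₀ : Set X) ∧
      TopologicalSpace.IsSeparable (Y₀ : Set Y) ∧
      A ⊆ X₀ ∧
      T '' ({x : X | ‖x‖ = 1} ∩ X₀) = {y : Y | ‖y‖ = 1} ∩ Y₀ := by
  classical
  obtain ⟨c0, hc0count, hc0cl⟩ := hA
  set C : ℕ → Set X := auxC T hsurj c0 with hCdef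
  set Cinf : Set X := ⋃ n, C n with hCinf
  have hCsucc : ∀ n, C (n + 1) = auxStep T hsurj (C n) := fun n => rfl
  have hCmono : Monotone C := by
    apply monotone_nat_of_le_succ
    intro n
    rw [hCsucc n]
    exact subset_union_left.trans subset_union_left
  have hCcount : ∀ n, (C n).Countable := by
    intro n
    induction n with
    | zero => exact hc0count
    | succ n ih =>
        rw [hCsucc n]
        exact ((ih.union (auxDS_countable _)).union ((auxDS_countable _).image _))
  have hCinfcount : Cinf.Countable := countable_iUnion hCcount
  set X₀ : Subspace ℝ X := (span ℝ Cinf).topologicalClosure with hX₀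
  set Y₀ : Subspace ℝ Y := (span ℝ (T '' ({x : X | ‖x‖ = 1} ∩ Cinf))).topologicalClosure with hY₀
  -- membership of sphere elements of Cinf in X₀, of their images in Y₀
  have hCinfX₀ : Cinf ⊆ (X₀ : Set X) := fun z hz =>
    (span ℝ Cinf).le_topologicalClosure (subset_span hz)
  -- a dense family in the sphere of X₀ inside Cinf
  have hDdense : ∀ x : X, ‖x‖ = 1 → x ∈ X₀ → ∀ ε : ℝ, 0 < ε →
      ∃ d, ‖d‖ = 1 ∧ d ∈ Cinf ∧ ‖x - d‖ < ε := by
    intro x hx hxX ε hε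
    obtain ⟨n, u, hu1, huc, hux⟩ := aux_sphere_dense C hCmono hx hxX (half_pos hε)
    have husph : u ∈ {v : X | ‖v‖ = 1} ∩ ((span ℝ (C n)).topologicalClosure : Set X) :=
      ⟨hu1, huc⟩
    have hsep : TopologicalSpace.IsSeparable
        ({v : X | ‖v‖ = 1} ∩ ((span ℝ (C n)).topologicalClosure : Set X)) := by
      apply TopologicalSpace.IsSeparable.mono _ inter_subset_right
      rw [Submodule.topologicalClosure_coe]
      exact ((hCcount n).isSeparable.span).closure
    have := auxDS_dense hsep husph
    obtain ⟨d, hd, hdu⟩ := Metric.mem_closure_iff.1 this _ (half_pos hε)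
    rw [dist_eq_norm] at hdu
    have hdsub := auxDS_subset _ hd
    refine ⟨d, hdsub.1, ?_, ?_⟩
    · apply mem_iUnion.2 ⟨n + 1, ?_⟩
      rw [hCsucc n]
      exact subset_union_left (Or.inr hd)
    · calc ‖x - d‖ ≤ ‖x - u‖ + ‖u - d‖ := by
            have : x - d = (x - u) + (u - d) := by abel
            rw [this]; exact norm_add_le _ _
        _ < ε := by linarith
  -- a dense family in the sphere of Y₀ whose preimages lie in Cinf
  have hTimg : T '' ({x : X | ‖x‖ = 1} ∩ Cinf) = ⋃ n, T '' ({x : X | ‖x‖ = 1} ∩ C n) := by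
    rw [hCinf, inter_iUnion, image_iUnion]
  have hEdense : ∀ y : Y, ‖y‖ = 1 → y ∈ Y₀ → ∀ ε : ℝ, 0 < ε →
      ∃ q, ‖q‖ = 1 ∧ q ∈ Cinf ∧ ‖y - T q‖ < ε ∧ ‖T q‖ = 1 := by
    intro y hy hyY ε hε
    have hyY' : y ∈ (span ℝ (⋃ n, T '' ({x : X | ‖x‖ = 1} ∩ C n))).topologicalClosure := by
      rw [← hTimg]; exact hyY
    have hGmono : Monotone (fun n => T '' ({x : X | ‖x‖ = 1} ∩ C n)) :=
      fun a b hab => image_mono (inter_subset_inter_right _ (hCmono hab))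
    obtain ⟨n, u, hu1, huc, huy⟩ := aux_sphere_dense _ hGmono hy hyY' (half_pos hε)
    have husph : u ∈ {v : Y | ‖v‖ = 1} ∩
        ((span ℝ (T '' ({x : X | ‖x‖ = 1} ∩ C n))).topologicalClosure : Set Y) := ⟨hu1, huc⟩
    have hsep : TopologicalSpace.IsSeparable
        ({v : Y | ‖v‖ = 1} ∩
          ((span ℝ (T '' ({x : X | ‖x‖ = 1} ∩ C n))).topologicalClosure : Set Y)) := by
      apply TopologicalSpace.IsSeparable.mono _ inter_subset_right
      rw [Submodule.topologicalClosure_coe]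
      exact ((((hCcount n).mono inter_subset_right).image T).isSeparable.span).closure
    have := auxDS_dense hsep husph
    obtain ⟨e, he, heu⟩ := Metric.mem_closure_iff.1 this _ (half_pos hε)
    rw [dist_eq_norm] at heu
    have hesph := auxDS_subset _ he
    have he1 : ‖e‖ = 1 := hesph.1
    obtain ⟨hq1, hqT⟩ := auxPre_spec T hsurj he1
    refine ⟨auxPre T hsurj e, hq1, ?_, ?_, ?_⟩
    · apply mem_iUnion.2 ⟨n + 1, ?_⟩
      rw [hCsucc n]
      exact Or.inr ⟨e, he, rfl⟩
    · rw [hqT]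
      calc ‖y - e‖ ≤ ‖y - u‖ + ‖u - e‖ := by
            have : y - e = (y - u) + (u - e) := by abel
            rw [this]; exact norm_add_le _ _
        _ < ε := by linarith
    · rw [hqT]; exact he1
  refine ⟨X₀, Y₀, Submodule.isClosed_topologicalClosure _,
    Submodule.isClosed_topologicalClosure _, ?_, ?_, ?_, ?_⟩
  · rw [hX₀, Submodule.topologicalClosure_coe]
    exact (hCinfcount.isSeparable.span).closure
  · rw [hY₀, Submodule.topologicalClosure_coe]
    exact (((hCinfcount.mono inter_subset_right).image T).isSeparable.span).closure
  · -- A ⊆ X₀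
    intro a ha
    have h1 : closure c0 ⊆ (X₀ : Set X) := by
      apply closure_minimal _ (Submodule.isClosed_topologicalClosure _)
      intro z hz
      exact hCinfX₀ (mem_iUnion.2 ⟨0, hz⟩)
    exact h1 (hc0cl ha)
  · -- the image equality
    apply Subset.antisymm
    · rintro _ ⟨x, ⟨hx1, hxX⟩, rfl⟩
      refine ⟨hmap x hx1, ?_⟩
      have hclosed : IsClosed (Y₀ : Set Y) := Submodule.isClosed_topologicalClosure _
      rw [← hclosed.closure_eq, Metric.mem_closure_iff]
      intro ε hε
      obtain ⟨d, hd1, hdC, hdx⟩ := hDdense x hx1 hxX ε hε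
      have hTd : T d ∈ Y₀ := (span ℝ _).le_topologicalClosure (subset_span ⟨d, ⟨hd1, hdC⟩, rfl⟩)
      have hset := hphase x d hx1 hd1
      have hmem : ‖x - d‖ ∈ ({‖T x + T d‖, ‖T x - T d‖} : Set ℝ) := by
        rw [hset]; right; rfl
      rcases hmem with h | h
      · refine ⟨-(T d), Y₀.neg_mem hTd, ?_⟩
        rw [dist_eq_norm, sub_neg_eq_add, ← h]; exact hdx
      · refine ⟨T d, hTd, ?_⟩
        rw [dist_eq_norm, ← h]; exact hdx
    · rintro y ⟨hy1, hyY⟩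
      obtain ⟨hp1, hpT⟩ := auxPre_spec T hsurj hy1
      set p := auxPre T hsurj y with hp
      have hpX : p ∈ X₀ := by
        have hclosed : IsClosed (X₀ : Set X) := Submodule.isClosed_topologicalClosure _
        rw [← SetLike.mem_coe, ← hclosed.closure_eq, Metric.mem_closure_iff]
        intro ε hε
        obtain ⟨q, hq1, hqC, hqy, hTq1⟩ := hEdense y hy1 hyY ε hε
        have hqX : q ∈ X₀ := hCinfX₀ hqC
        have hset := hphase p q hp1 hq1
        have hmem : ‖T p - T q‖ ∈ ({‖p + q‖, ‖p - q‖} : Set ℝ) := by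
          rw [← hset]; right; rfl
        have hval : ‖T p - T q‖ < ε := by rw [hpT]; exact hqy
        rcases hmem with h | h
        · refine ⟨-q, X₀.neg_mem hqX, ?_⟩
          rw [dist_eq_norm, sub_neg_eq_add, ← h]; exact hval
        · refine ⟨q, hqX, ?_⟩
          rw [dist_eq_norm, ← h]; exact hval
      exact ⟨p, ⟨hp1, hpX⟩, hpT⟩
end

section
/- Let K be a compact Hausdorff space. Every maximal convex subset of the unit sphere of C(K) is of the form F_t = {f ∈ S_{C(K)} : f(t) = 1} or -F_t for some t ∈ K. -/
open Set

lemma exists_abs_apply_eq_norm {K : Type*} [TopologicalSpace K] [CompactSpace K] [Nonempty K]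
    (f : C(K, ℝ)) : ∃ t, |f t| = ‖f‖ := by
  obtain ⟨t, -, ht⟩ := isCompact_univ.exists_isMaxOn univ_nonempty
    ((continuous_abs.comp f.continuous).continuousOn)
  refine ⟨t, le_antisymm (by simpa using f.norm_coe_le_norm t) ?_⟩
  exact (ContinuousMap.norm_le f (abs_nonneg _)).mpr fun x => by
    simpa using ht (mem_univ x)

lemma level_convex {K : Type*} [TopologicalSpace K] [CompactSpace K]
    (t : K) (c : ℝ) (hc : |c| = 1) :
    Convex ℝ {f : C(K, ℝ) | ‖f‖ = 1 ∧ f t = c} := by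
  rintro f ⟨hf1, hf2⟩ g ⟨hg1, hg2⟩ a b ha hb hab
  have happ : (a • f + b • g) t = c := by
    simp only [ContinuousMap.add_apply, ContinuousMap.smul_apply, smul_eq_mul, hf2, hg2]
    linear_combination c * hab
  refine ⟨le_antisymm ?_ ?_, happ⟩
  · calc ‖a • f + b • g‖ ≤ ‖a • f‖ + ‖b • g‖ := norm_add_le _ _
      _ = |a| * ‖f‖ + |b| * ‖g‖ := by
            rw [show ‖a • f‖ = ‖a‖ * ‖f‖ from norm_smul a f,
              show ‖b • g‖ = ‖b‖ * ‖g‖ from norm_smul b g,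
              Real.norm_eq_abs, Real.norm_eq_abs]
      _ = 1 := by rw [abs_of_nonneg ha, abs_of_nonneg hb, hf1, hg1]; linarith
  · calc (1:ℝ) = |(a • f + b • g) t| := by rw [happ, hc]
      _ ≤ ‖a • f + b • g‖ := by simpa using (a • f + b • g).norm_coe_le_norm t

theorem stmt6 {K : Type*} [TopologicalSpace K] [CompactSpace K] [T2Space K] [Nonempty K]
    (F : Set C(K, ℝ)) (hF : F ⊆ {f : C(K, ℝ) | ‖f‖ = 1}) (hconv : Convex ℝ F)
    (hmax : ∀ C : Set C(K, ℝ), Convex ℝ C → C ⊆ {f : C(K, ℝ) | ‖f‖ = 1} → F ⊆ C → C = F) :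
    ∃ t : K, F = {f : C(K, ℝ) | ‖f‖ = 1 ∧ f t = 1} ∨
      F = -{f : C(K, ℝ) | ‖f‖ = 1 ∧ f t = 1} := by
  classical
  set Z : F → Set (K × Bool) :=
    fun f => {p | (f : C(K, ℝ)) p.1 = if p.2 then (1:ℝ) else -1} with hZ
  have hZclosed : ∀ f : F, IsClosed (Z f) := by
    intro f
    have h1 : Continuous fun p : K × Bool => (f : C(K, ℝ)) p.1 :=
      (f : C(K, ℝ)).continuous.comp continuous_fst
    have h2 : Continuous fun p : K × Bool => if p.2 then (1:ℝ) else -1 :=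
      (continuous_of_discreteTopology (f := fun b : Bool => if b then (1:ℝ) else -1)).comp
        continuous_snd
    exact isClosed_eq h1 h2
  -- the big intersection is nonempty
  have hinter : (⋂ f : F, Z f).Nonempty := by
    by_contra h
    rw [not_nonempty_iff_eq_empty] at h
    have h' : (univ : Set (K × Bool)) ∩ ⋂ f : F, Z f = ∅ := by rw [univ_inter, h]
    obtain ⟨u, hu⟩ := isCompact_univ.elim_finite_subfamily_closed Z hZclosed h'
    rw [univ_inter] at hu
    rcases u.eq_empty_or_nonempty with rfl | hune
    · simp at hu
    · set n := u.card with hn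
      have hnpos : (0:ℝ) < n := by exact_mod_cast Finset.card_pos.mpr hune
      set g : C(K, ℝ) := ∑ i ∈ u, ((n:ℝ)⁻¹) • (i : C(K, ℝ)) with hg
      have hgF : g ∈ F := by
        refine hconv.sum_mem (fun i _ => by positivity) ?_ (fun i _ => i.2)
        rw [Finset.sum_const, nsmul_eq_mul]
        field_simp
        rfl
      have hgnorm : ‖g‖ = 1 := hF hgF
      obtain ⟨t, ht⟩ := exists_abs_apply_eq_norm g
      rw [hgnorm] at ht
      have hgt : g t = (n:ℝ)⁻¹ * ∑ i ∈ u, (i : C(K, ℝ)) t := by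
        simp [hg, Finset.mul_sum]
      have hle : ∀ i : F, i ∈ u → ((i : C(K, ℝ)) t) ≤ 1 ∧ -1 ≤ ((i : C(K, ℝ)) t) := by
        intro i hi
        have h1 : |(i : C(K, ℝ)) t| ≤ 1 := by
          have := (i : C(K, ℝ)).norm_coe_le_norm t
          rw [hF i.2] at this
          simpa using this
        exact ⟨(abs_le.mp h1).2, (abs_le.mp h1).1⟩
      rcases (abs_eq (by norm_num : (0:ℝ) ≤ 1)).mp ht with h1 | h1
      · -- g t = 1 : all values are 1, point (t, true)
        have hsum : ∑ i ∈ u, (i : C(K, ℝ)) t = ∑ i ∈ u, (1:ℝ) := by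
          rw [Finset.sum_const, nsmul_eq_mul, mul_one]
          have := hgt.symm.trans h1
          field_simp at this
          linarith [this]
        have hall : ∀ i ∈ u, ((i : C(K, ℝ)) t) = 1 :=
          (Finset.sum_eq_sum_iff_of_le (fun i hi => (hle i hi).1)).mp hsum
        have : (t, true) ∈ ⋂ i ∈ u, Z i := by
          simp only [mem_iInter]
          intro i hi
          simp [hZ, hall i hi]
        rw [hu] at this
        exact this
      · -- g t = -1
        have hsum : ∑ i ∈ u, (-1:ℝ) = ∑ i ∈ u, (i : C(K, ℝ)) t := by
          rw [Finset.sum_const, nsmul_eq_mul, mul_neg_one]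
          have := hgt.symm.trans h1
          field_simp at this
          linarith [this]
        have hall : ∀ i ∈ u, (-1:ℝ) = ((i : C(K, ℝ)) t) :=
          (Finset.sum_eq_sum_iff_of_le (fun i hi => (hle i hi).2)).mp hsum
        have : (t, false) ∈ ⋂ i ∈ u, Z i := by
          simp only [mem_iInter]
          intro i hi
          simp [hZ, (hall i hi).symm]
        rw [hu] at this
        exact this
  obtain ⟨⟨t, b⟩, hp⟩ := hinter
  rw [mem_iInter] at hp
  cases b with
  | true =>
      refine ⟨t, Or.inl ?_⟩
      have hsub : F ⊆ {f : C(K, ℝ) | ‖f‖ = 1 ∧ f t = 1} := by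
        intro f hf
        refine ⟨hF hf, ?_⟩
        have := hp ⟨f, hf⟩
        simpa [hZ] using this
      exact (hmax _ (level_convex t 1 (by norm_num))
        (fun f hf => hf.1) hsub).symm
  | false =>
      refine ⟨t, Or.inr ?_⟩
      have hsub : F ⊆ {f : C(K, ℝ) | ‖f‖ = 1 ∧ f t = -1} := by
        intro f hf
        refine ⟨hF hf, ?_⟩
        have := hp ⟨f, hf⟩
        simpa [hZ] using this
      have hneg : -{f : C(K, ℝ) | ‖f‖ = 1 ∧ f t = 1}
          = {f : C(K, ℝ) | ‖f‖ = 1 ∧ f t = -1} := by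
        ext f
        simp only [Set.mem_neg, mem_setOf_eq, norm_neg, ContinuousMap.neg_apply]
        constructor
        · rintro ⟨h1, h2⟩; exact ⟨h1, by linarith⟩
        · rintro ⟨h1, h2⟩; exact ⟨h1, by linarith⟩
      rw [hneg]
      exact (hmax _ (level_convex t (-1) (by norm_num))
        (fun f hf => hf.1) hsub).symm
end

section
/- Let K, Ω be compact Hausdorff spaces and T : S_{C(K)} → S_{C(Ω)} a surjective phase-isometry. Then for every t ∈ K there exists s ∈ Ω such that T(F_t ∪ -F_t) = F_s ∪ -F_s, and the induced map σ : K → Ω, σ(t) = s, is a homeomorphism. -/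
open Set

/-- maximum of `|f|` is attained on a compact space -/
lemma phase7_attain {X : Type*} [TopologicalSpace X] [CompactSpace X] [Nonempty X]
    (f : C(X, ℝ)) : ∃ t, |f t| = ‖f‖ := by
  obtain ⟨t, -, ht⟩ := isCompact_univ.exists_isMaxOn univ_nonempty
    ((map_continuous f).abs.continuousOn)
  refine ⟨t, le_antisymm ?_ ?_⟩
  · calc |f t| = ‖f t‖ := (Real.norm_eq_abs _).symm
      _ ≤ ‖f‖ := f.norm_coe_le_norm t
  · exact (f.norm_le (abs_nonneg _)).mpr fun x => by
      rw [Real.norm_eq_abs]; exact ht (mem_univ x)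

lemma phase7_ne {X : Type*} [TopologicalSpace X] [CompactSpace X]
    (f : C(X, ℝ)) (hf : ‖f‖ = 1) : Nonempty X := by
  by_contra h
  have hf0 : f = 0 := by ext x; exact absurd ⟨x⟩ h
  rw [hf0, norm_zero] at hf
  norm_num at hf

lemma phase7_bound {X : Type*} [TopologicalSpace X] [CompactSpace X]
    (f : C(X, ℝ)) (hf : ‖f‖ = 1) : ∀ x, |f x| ≤ 1 := fun x => by
  rw [← Real.norm_eq_abs, ← hf]; exact f.norm_coe_le_norm x

lemma phase7_norm_one {X : Type*} [TopologicalSpace X] [CompactSpace X]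
    (f : C(X, ℝ)) (hb : ∀ x, |f x| ≤ 1) {x : X} (hx : |f x| = 1) : ‖f‖ = 1 := by
  refine le_antisymm ((f.norm_le zero_le_one).mpr fun y => by
    rw [Real.norm_eq_abs]; exact hb y) ?_
  calc (1 : ℝ) = |f x| := hx.symm
    _ = ‖f x‖ := (Real.norm_eq_abs _).symm
    _ ≤ ‖f‖ := f.norm_coe_le_norm x

lemma phase7_const {X : Type*} [TopologicalSpace X] [CompactSpace X] [Nonempty X] :
    ‖ContinuousMap.const X (1 : ℝ)‖ = 1 :=
  phase7_norm_one _ (fun x => by simp) (x := Classical.arbitrary X) (by simp)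

/-- characterization of the relation via norms -/
lemma phase7_R {X : Type*} [TopologicalSpace X] [CompactSpace X]
    (f g : C(X, ℝ)) (hf : ‖f‖ = 1) (hg : ‖g‖ = 1) :
    (∃ x, |f x| = 1 ∧ |g x| = 1) ↔ (‖f + g‖ = 2 ∨ ‖f - g‖ = 2) := by
  have hfb := phase7_bound f hf
  have hgb := phase7_bound g hg
  constructor
  · rintro ⟨x, hfx, hgx⟩
    rcases (abs_eq (zero_le_one)).mp hfx with h1 | h1 <;>
      rcases (abs_eq (zero_le_one)).mp hgx with h2 | h2
    · left
      refine le_antisymm (by calc ‖f + g‖ ≤ ‖f‖ + ‖g‖ := norm_add_le f g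
        _ = 2 := by rw [hf, hg]; norm_num) ?_
      calc (2 : ℝ) = ‖(f + g) x‖ := by
            simp [ContinuousMap.add_apply, h1, h2, Real.norm_eq_abs]; norm_num
        _ ≤ ‖f + g‖ := (f + g).norm_coe_le_norm x
    · right
      refine le_antisymm (by calc ‖f - g‖ ≤ ‖f‖ + ‖g‖ := norm_sub_le f g
        _ = 2 := by rw [hf, hg]; norm_num) ?_
      calc (2 : ℝ) = ‖(f - g) x‖ := by
            simp [ContinuousMap.sub_apply, h1, h2, Real.norm_eq_abs]; norm_num
        _ ≤ ‖f - g‖ := (f - g).norm_coe_le_norm x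
    · right
      refine le_antisymm (by calc ‖f - g‖ ≤ ‖f‖ + ‖g‖ := norm_sub_le f g
        _ = 2 := by rw [hf, hg]; norm_num) ?_
      calc (2 : ℝ) = ‖(f - g) x‖ := by
            simp [ContinuousMap.sub_apply, h1, h2, Real.norm_eq_abs]; norm_num
        _ ≤ ‖f - g‖ := (f - g).norm_coe_le_norm x
    · left
      refine le_antisymm (by calc ‖f + g‖ ≤ ‖f‖ + ‖g‖ := norm_add_le f g
        _ = 2 := by rw [hf, hg]; norm_num) ?_
      calc (2 : ℝ) = ‖(f + g) x‖ := by
            simp [ContinuousMap.add_apply, h1, h2, Real.norm_eq_abs]; norm_num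
        _ ≤ ‖f + g‖ := (f + g).norm_coe_le_norm x
  · haveI : Nonempty X := phase7_ne f hf
    rintro (h | h)
    · obtain ⟨x, hx⟩ := phase7_attain (f + g)
      rw [h] at hx
      have h1 : |f x + g x| = 2 := by simpa [ContinuousMap.add_apply] using hx
      have h2 : |f x + g x| ≤ |f x| + |g x| := abs_add_le _ _
      exact ⟨x, by linarith [hfb x, hgb x], by linarith [hfb x, hgb x]⟩
    · obtain ⟨x, hx⟩ := phase7_attain (f - g)
      rw [h] at hx
      have h1 : |f x - g x| = 2 := by simpa [ContinuousMap.sub_apply] using hx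
      have h2 : |f x - g x| ≤ |f x| + |g x| := abs_sub _ _
      exact ⟨x, by linarith [hfb x, hgb x], by linarith [hfb x, hgb x]⟩

/-- Urysohn: unit peak function vanishing on a closed set -/
lemma phase7_urysohn {X : Type*} [TopologicalSpace X] [CompactSpace X] [T2Space X]
    {C : Set X} (hC : IsClosed C) {t : X} (ht : t ∉ C) :
    ∃ f : C(X, ℝ), ‖f‖ = 1 ∧ f t = 1 ∧ ∀ x ∈ C, f x = 0 := by
  obtain ⟨f, hf0, hf1, hf01⟩ := exists_continuous_zero_one_of_isClosed hC isClosed_singleton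
    (disjoint_singleton_right.mpr ht)
  have hft : f t = 1 := hf1 rfl
  refine ⟨f, phase7_norm_one f (fun x => abs_le.mpr ⟨by linarith [(hf01 x).1], (hf01 x).2⟩)
    (x := t) (by rw [hft]; norm_num), hft, fun x hx => hf0 hx⟩

/-- separation by two unit functions with disjoint peak sets -/
lemma phase7_sep {X : Type*} [TopologicalSpace X] [CompactSpace X] [T2Space X]
    {x1 x2 : X} (h : x1 ≠ x2) :
    ∃ g1 g2 : C(X, ℝ), ‖g1‖ = 1 ∧ ‖g2‖ = 1 ∧ |g1 x1| = 1 ∧ |g2 x2| = 1 ∧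
      ∀ x, ¬(|g1 x| = 1 ∧ |g2 x| = 1) := by
  obtain ⟨u, hu0, hu1, hu01⟩ := exists_continuous_zero_one_of_isClosed
    (isClosed_singleton (x := x1)) (isClosed_singleton (x := x2))
    (by simpa [Set.disjoint_singleton] using h)
  have hux1 : u x1 = 0 := hu0 rfl
  have hux2 : u x2 = 1 := hu1 rfl
  refine ⟨1 - u, u, ?_, ?_, ?_, ?_, ?_⟩
  · refine phase7_norm_one _ (fun x => ?_) (x := x1) ?_
    · simp only [ContinuousMap.sub_apply, ContinuousMap.one_apply]
      rw [abs_le]; constructor <;> linarith [(hu01 x).1, (hu01 x).2]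
    · simp [ContinuousMap.sub_apply, ContinuousMap.one_apply, hux1]
  · exact phase7_norm_one _ (fun x => abs_le.mpr ⟨by linarith [(hu01 x).1], (hu01 x).2⟩)
      (x := x2) (by rw [hux2]; norm_num)
  · simp [ContinuousMap.sub_apply, ContinuousMap.one_apply, hux1]
  · rw [hux2]; norm_num
  · intro x ⟨h1, h2⟩
    have hx2 : u x = 1 := by
      rcases (abs_eq zero_le_one).mp h2 with h' | h'
      · exact h'
      · linarith [(hu01 x).1]
    simp only [ContinuousMap.sub_apply, ContinuousMap.one_apply, hx2] at h1
    norm_num at h1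

/-- peak sets of products -/
lemma phase7_mul {X : Type*} [TopologicalSpace X] [CompactSpace X]
    (f g : C(X, ℝ)) (hf : ‖f‖ = 1) (hg : ‖g‖ = 1) :
    (∀ x, |(f * g) x| = 1 ↔ (|f x| = 1 ∧ |g x| = 1)) ∧ ∀ x, |(f * g) x| ≤ 1 := by
  have hfb := phase7_bound f hf
  have hgb := phase7_bound g hg
  constructor
  · intro x
    rw [ContinuousMap.mul_apply, abs_mul]
    constructor
    · intro h
      have h1 : |f x| = 1 := le_antisymm (hfb x)
        (by nlinarith [abs_nonneg (f x), abs_nonneg (g x), hfb x, hgb x])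
      have h2 : |g x| = 1 := by
        rw [h1] at h; linarith
      exact ⟨h1, h2⟩
    · rintro ⟨h1, h2⟩; rw [h1, h2]; norm_num
  · intro x
    rw [ContinuousMap.mul_apply, abs_mul]
    nlinarith [abs_nonneg (f x), abs_nonneg (g x), hfb x, hgb x]

/-- the union of faces as an absolute-value set -/
lemma phase7_union {X : Type*} [TopologicalSpace X] [CompactSpace X] (t : X) :
    ({f : C(X, ℝ) | ‖f‖ = 1 ∧ f t = 1} ∪ -{f : C(X, ℝ) | ‖f‖ = 1 ∧ f t = 1}) =
      {f : C(X, ℝ) | ‖f‖ = 1 ∧ |f t| = 1} := by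
  ext f
  simp only [Set.mem_union, Set.mem_setOf_eq, Set.mem_neg, ContinuousMap.neg_apply,
    norm_neg, abs_eq (zero_le_one : (0:ℝ) ≤ 1)]
  constructor
  · rintro (⟨h1, h2⟩ | ⟨h1, h2⟩)
    · exact ⟨h1, Or.inl h2⟩
    · exact ⟨h1, Or.inr (by linarith)⟩
  · rintro ⟨h1, h2 | h2⟩
    · exact Or.inl ⟨h1, h2⟩
    · exact Or.inr ⟨h1, by rw [h2]; norm_num⟩

theorem stmt7 {K Ω : Type*} [TopologicalSpace K] [CompactSpace K] [T2Space K]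
    [TopologicalSpace Ω] [CompactSpace Ω] [T2Space Ω]
    (T : C(K, ℝ) → C(Ω, ℝ))
    (hmap : ∀ f : C(K, ℝ), ‖f‖ = 1 → ‖T f‖ = 1)
    (hsurj : ∀ g : C(Ω, ℝ), ‖g‖ = 1 → ∃ f : C(K, ℝ), ‖f‖ = 1 ∧ T f = g)
    (hphase : ∀ f g : C(K, ℝ), ‖f‖ = 1 → ‖g‖ = 1 →
      ({‖T f + T g‖, ‖T f - T g‖} : Set ℝ) = {‖f + g‖, ‖f - g‖}) :
    ∃ σ : K ≃ₜ Ω, ∀ t : K,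
      T '' ({f : C(K, ℝ) | ‖f‖ = 1 ∧ f t = 1} ∪ -{f : C(K, ℝ) | ‖f‖ = 1 ∧ f t = 1}) =
        {g : C(Ω, ℝ) | ‖g‖ = 1 ∧ g (σ t) = 1} ∪
          -{g : C(Ω, ℝ) | ‖g‖ = 1 ∧ g (σ t) = 1} := by
  by_cases hKe : Nonempty K
  swap
  · -- K empty: Ω must be empty too
    haveI hKE : IsEmpty K := not_nonempty_iff.mp hKe
    haveI hΩE : IsEmpty Ω := by
      by_contra hΩ
      rw [not_isEmpty_iff] at hΩ
      haveI := hΩ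
      obtain ⟨f, hf, -⟩ := hsurj (ContinuousMap.const Ω 1) phase7_const
      exact absurd (phase7_ne f hf) hKe
    refine ⟨⟨Equiv.equivOfIsEmpty K Ω,
      continuous_iff_continuousAt.mpr fun x => isEmptyElim x,
      continuous_iff_continuousAt.mpr fun x => isEmptyElim x⟩, fun t => isEmptyElim t⟩
  haveI : Nonempty K := hKe
  haveI : Nonempty Ω :=
    phase7_ne _ (hmap (ContinuousMap.const K 1) phase7_const)
  -- closedness of peak sets
  have hclK : ∀ f : C(K, ℝ), IsClosed {x | |f x| = 1} :=
    fun f => isClosed_eq ((map_continuous f).abs) continuous_const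
  have hclΩ : ∀ g : C(Ω, ℝ), IsClosed {s | |g s| = 1} :=
    fun g => isClosed_eq ((map_continuous g).abs) continuous_const
  -- the relation is preserved
  have hiff : ∀ f g : C(K, ℝ), ‖f‖ = 1 → ‖g‖ = 1 →
      ((∃ x, |f x| = 1 ∧ |g x| = 1) ↔ (∃ s, |T f s| = 1 ∧ |T g s| = 1)) := by
    intro f g hf hg
    rw [phase7_R f g hf hg, phase7_R (T f) (T g) (hmap f hf) (hmap g hg)]
    have h := hphase f g hf hg
    have h2 : ((2:ℝ) = ‖T f + T g‖ ∨ (2:ℝ) = ‖T f - T g‖) ↔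
        ((2:ℝ) = ‖f + g‖ ∨ (2:ℝ) = ‖f - g‖) := by
      have := Set.ext_iff.mp h 2
      simpa [Set.mem_insert_iff] using this
    constructor
    · rintro (h3 | h3)
      · exact (h2.mpr (Or.inl h3.symm)).imp Eq.symm Eq.symm
      · exact (h2.mpr (Or.inr h3.symm)).imp Eq.symm Eq.symm
    · rintro (h3 | h3)
      · exact (h2.mp (Or.inl h3.symm)).imp Eq.symm Eq.symm
      · exact (h2.mp (Or.inr h3.symm)).imp Eq.symm Eq.symm
  -- order lemma, forward
  have horder1 : ∀ f g : C(K, ℝ), ‖f‖ = 1 → ‖g‖ = 1 →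
      ({x | |f x| = 1} ⊆ {x | |g x| = 1}) →
      {s | |T f s| = 1} ⊆ {s | |T g s| = 1} := by
    intro f g hf hg hsub s hs
    by_contra hns
    obtain ⟨h, hh1, hhs, hh0⟩ := phase7_urysohn (hclΩ (T g)) hns
    obtain ⟨k, hk1, hTk⟩ := hsurj h hh1
    obtain ⟨x, hkx, hfx⟩ := (hiff k f hk1 hf).mpr
      ⟨s, by rw [hTk, hhs]; norm_num, hs⟩
    obtain ⟨s', hks', hgs'⟩ := (hiff k g hk1 hg).mp ⟨x, hkx, hsub hfx⟩
    rw [hTk, hh0 s' hgs'] at hks'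
    norm_num at hks'
  -- order lemma, backward
  have horder2 : ∀ f g : C(K, ℝ), ‖f‖ = 1 → ‖g‖ = 1 →
      ({s | |T f s| = 1} ⊆ {s | |T g s| = 1}) →
      {x | |f x| = 1} ⊆ {x | |g x| = 1} := by
    intro f g hf hg hsub t ht
    by_contra hnt
    obtain ⟨k, hk1, hkt, hk0⟩ := phase7_urysohn (hclK g) hnt
    obtain ⟨s, hks, hfs⟩ := (hiff k f hk1 hf).mp ⟨t, by rw [hkt]; norm_num, ht⟩
    obtain ⟨x, hkx, hgx⟩ := (hiff k g hk1 hg).mpr ⟨s, hks, hsub hfs⟩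
    rw [hk0 x hgx] at hkx
    norm_num at hkx
  -- existence of σ t
  have hexist : ∀ t : K, ∃ s : Ω, ∀ f : C(K, ℝ), ‖f‖ = 1 → |f t| = 1 → |T f s| = 1 := by
    intro t
    haveI hne : Nonempty {f : C(K, ℝ) // ‖f‖ = 1 ∧ |f t| = 1} :=
      ⟨⟨ContinuousMap.const K 1, phase7_const, by simp⟩⟩
    have key := IsCompact.nonempty_iInter_of_directed_nonempty_isCompact_isClosed
      (fun f : {f : C(K, ℝ) // ‖f‖ = 1 ∧ |f t| = 1} => {s | |T f.1 s| = 1}) ?_ ?_ ?_ ?_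
    · obtain ⟨s, hs⟩ := key
      exact ⟨s, fun f hf hft => Set.mem_iInter.mp hs ⟨f, hf, hft⟩⟩
    · rintro ⟨f, hf, hft⟩ ⟨g, hg, hgt⟩
      have hm := phase7_mul f g hf hg
      have hpt : |(f * g) t| = 1 := (hm.1 t).mpr ⟨hft, hgt⟩
      have hp1 : ‖f * g‖ = 1 := phase7_norm_one _ hm.2 hpt
      exact ⟨⟨f * g, hp1, hpt⟩,
        horder1 (f * g) f hp1 hf (fun x hx => ((hm.1 x).mp hx).1),
        horder1 (f * g) g hp1 hg (fun x hx => ((hm.1 x).mp hx).2)⟩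
    · rintro ⟨f, hf, hft⟩
      obtain ⟨s, hs⟩ := phase7_attain (T f)
      exact ⟨s, by rw [Set.mem_setOf_eq, hs, hmap f hf]⟩
    · exact fun f => (hclΩ (T f.1)).isCompact
    · exact fun f => hclΩ (T f.1)
  -- key backward lemma
  have hkey : ∀ (t : K) (s : Ω), (∀ f : C(K, ℝ), ‖f‖ = 1 → |f t| = 1 → |T f s| = 1) →
      ∀ g : C(K, ℝ), ‖g‖ = 1 → |T g s| = 1 → |g t| = 1 := by
    intro t s hPts g hg hTg
    by_contra hnt
    obtain ⟨k, hk1, hkt, hk0⟩ := phase7_urysohn (hclK g) (by exact hnt)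
    have hTk : |T k s| = 1 := hPts k hk1 (by rw [hkt]; norm_num)
    obtain ⟨x, hkx, hgx⟩ := (hiff k g hk1 hg).mpr ⟨s, hTk, hTg⟩
    rw [hk0 x hgx] at hkx
    norm_num at hkx
  -- uniqueness of σ t
  have huniq : ∀ (t : K) (s1 s2 : Ω),
      (∀ f : C(K, ℝ), ‖f‖ = 1 → |f t| = 1 → |T f s1| = 1) →
      (∀ f : C(K, ℝ), ‖f‖ = 1 → |f t| = 1 → |T f s2| = 1) → s1 = s2 := by
    intro t s1 s2 hP1 hP2
    by_contra hne
    obtain ⟨g1, g2, hg1, hg2, hg1s, hg2s, hdisj⟩ := phase7_sep hne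
    obtain ⟨f1, hf1, hTf1⟩ := hsurj g1 hg1
    obtain ⟨f2, hf2, hTf2⟩ := hsurj g2 hg2
    have h1 : |f1 t| = 1 := hkey t s1 hP1 f1 hf1 (by rw [hTf1]; exact hg1s)
    have h2 : |f2 t| = 1 := hkey t s2 hP2 f2 hf2 (by rw [hTf2]; exact hg2s)
    obtain ⟨s, hs1, hs2⟩ := (hiff f1 f2 hf1 hf2).mp ⟨t, h1, h2⟩
    rw [hTf1] at hs1
    rw [hTf2] at hs2
    exact hdisj s ⟨hs1, hs2⟩
  -- define σ
  set σ : K → Ω := fun t => Classical.choose (hexist t) with hσdef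
  have hσ : ∀ (t : K) (f : C(K, ℝ)), ‖f‖ = 1 → |f t| = 1 → |T f (σ t)| = 1 :=
    fun t => Classical.choose_spec (hexist t)
  -- injectivity
  have hinj : Function.Injective σ := by
    intro t1 t2 he
    by_contra hne
    obtain ⟨k1, k2, hk1, hk2, hk1t, hk2t, hdisj⟩ := phase7_sep hne
    have h1 : |T k1 (σ t1)| = 1 := hσ t1 k1 hk1 hk1t
    have h2 : |T k2 (σ t2)| = 1 := hσ t2 k2 hk2 hk2t
    rw [he] at h1
    obtain ⟨x, hx1, hx2⟩ := (hiff k1 k2 hk1 hk2).mpr ⟨σ t2, h1, h2⟩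
    exact hdisj x ⟨hx1, hx2⟩
  -- surjectivity
  have hsurjσ : Function.Surjective σ := by
    intro s
    haveI hne : Nonempty {f : C(K, ℝ) // ‖f‖ = 1 ∧ |T f s| = 1} := by
      obtain ⟨f0, hf0, hTf0⟩ := hsurj (ContinuousMap.const Ω 1) phase7_const
      exact ⟨⟨f0, hf0, by rw [hTf0]; simp⟩⟩
    have key := IsCompact.nonempty_iInter_of_directed_nonempty_isCompact_isClosed
      (fun f : {f : C(K, ℝ) // ‖f‖ = 1 ∧ |T f s| = 1} => {x | |f.1 x| = 1}) ?_ ?_ ?_ ?_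
    · obtain ⟨t, ht⟩ := key
      have hPts : ∀ f : C(K, ℝ), ‖f‖ = 1 → |f t| = 1 → |T f s| = 1 := by
        intro f hf hft
        by_contra hns
        obtain ⟨h, hh1, hhs, hh0⟩ := phase7_urysohn (hclΩ (T f)) (by exact hns)
        obtain ⟨k, hk1, hTk⟩ := hsurj h hh1
        have hkmem : t ∈ {x | |k x| = 1} :=
          Set.mem_iInter.mp ht ⟨k, hk1, by rw [hTk, hhs]; norm_num⟩
        obtain ⟨s', hks', hfs'⟩ := (hiff k f hk1 hf).mp ⟨t, hkmem, hft⟩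
        rw [hTk, hh0 s' hfs'] at hks'
        norm_num at hks'
      exact ⟨t, huniq t (σ t) s (hσ t) hPts⟩
    · rintro ⟨f, hf, hfs⟩ ⟨g, hg, hgs⟩
      have hm := phase7_mul (T f) (T g) (hmap f hf) (hmap g hg)
      have hqs : |(T f * T g) s| = 1 := (hm.1 s).mpr ⟨hfs, hgs⟩
      have hq1 : ‖T f * T g‖ = 1 := phase7_norm_one _ hm.2 hqs
      obtain ⟨p, hp1, hTp⟩ := hsurj (T f * T g) hq1
      refine ⟨⟨p, hp1, by rw [hTp]; exact hqs⟩, ?_, ?_⟩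
      · exact horder2 p f hp1 hf (fun x hx => by
          rw [Set.mem_setOf_eq, hTp] at hx; exact ((hm.1 x).mp hx).1)
      · exact horder2 p g hp1 hg (fun x hx => by
          rw [Set.mem_setOf_eq, hTp] at hx; exact ((hm.1 x).mp hx).2)
    · rintro ⟨f, hf, hfs⟩
      obtain ⟨x, hx⟩ := phase7_attain f
      exact ⟨x, by rw [Set.mem_setOf_eq, hx, hf]⟩
    · exact fun f => (hclK f.1).isCompact
    · exact fun f => hclK f.1
  -- continuity
  have hcont : Continuous σ := by
    rw [continuous_iff_isClosed]
    intro C hC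
    by_cases hCe : C = ∅
    · rw [hCe]; simp
    obtain ⟨s0, hs0⟩ := Set.nonempty_iff_ne_empty.mpr hCe
    have hrw : σ ⁻¹' C =
        ⋂ (f : {f : C(K, ℝ) // ‖f‖ = 1 ∧ ∀ x ∈ C, |T f x| = 1}), {x | |f.1 x| = 1} := by
      apply Set.Subset.antisymm
      · intro t ht
        refine Set.mem_iInter.mpr fun f => ?_
        exact hkey t (σ t) (hσ t) f.1 f.2.1 (f.2.2 (σ t) ht)
      · intro t ht
        by_contra hns
        obtain ⟨u, hu0, hu1, hu01⟩ := exists_continuous_zero_one_of_isClosed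
          isClosed_singleton hC (disjoint_singleton_left.mpr hns)
        have hu1' : ‖u‖ = 1 := phase7_norm_one u
          (fun x => abs_le.mpr ⟨by linarith [(hu01 x).1], (hu01 x).2⟩)
          (x := s0) (by rw [hu1 hs0]; norm_num)
        obtain ⟨f, hf, hTf⟩ := hsurj u hu1'
        have hmem : t ∈ {x | |f x| = 1} :=
          Set.mem_iInter.mp ht ⟨f, hf, fun x hx => by rw [hTf, hu1 hx]; norm_num⟩
        have := hσ t f hf hmem
        rw [hTf, hu0 rfl] at this
        norm_num at this
    rw [hrw]
    exact isClosed_iInter fun f => hclK f.1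
  -- assemble the homeomorphism
  refine ⟨Continuous.homeoOfEquivCompactToT2
    (f := Equiv.ofBijective σ ⟨hinj, hsurjσ⟩) hcont, fun t => ?_⟩
  rw [phase7_union t]
  have hst : (Continuous.homeoOfEquivCompactToT2
      (f := Equiv.ofBijective σ ⟨hinj, hsurjσ⟩) hcont) t = σ t := rfl
  rw [hst, phase7_union (σ t)]
  apply Set.Subset.antisymm
  · rintro g ⟨f, ⟨hf1, hft⟩, rfl⟩
    exact ⟨hmap f hf1, hσ t f hf1 hft⟩
  · rintro g ⟨hg1, hgs⟩
    obtain ⟨f, hf1, rfl⟩ := hsurj g hg1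
    exact ⟨f, ⟨hf1, hkey t (σ t) (hσ t) f hf1 hgs⟩, rfl⟩
end

section
/- Let K, Ω be compact Hausdorff spaces and T : S_{C(K)} → S_{C(Ω)} a surjective phase-isometry. Then T(e) is an extreme point of the closed unit ball of C(Ω) if and only if e is an extreme point of the closed unit ball of C(K). -/
section Aux

variable {X : Type*} [TopologicalSpace X] [CompactSpace X] [T2Space X]

private lemma exists_norm_attain [Nonempty X] (f : C(X, ℝ)) : ∃ x, ‖f‖ = ‖f x‖ := by
  have := (isCompact_univ (X := X)).exists_isMaxOn Set.univ_nonempty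
    (f := fun t => ‖f t‖) (by fun_prop)
  obtain ⟨x, -, hx⟩ := this
  exact ⟨x, le_antisymm ((f.norm_le (norm_nonneg _)).2 (fun y => hx (Set.mem_univ y)))
    (f.norm_coe_le_norm x)⟩

/-- If e is extreme then |e t| = 1 for all t. -/
private lemma ptwise_of_extreme (e : C(X, ℝ))
    (hex : e ∈ Set.extremePoints ℝ (Metric.closedBall (0 : C(X, ℝ)) 1)) :
    ∀ t, |e t| = 1 := by
  obtain ⟨hmem, hext⟩ := mem_extremePoints.1 hex
  rw [Metric.mem_closedBall, dist_zero_right] at hmem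
  by_contra h
  push_neg at h
  obtain ⟨t₀, ht₀⟩ := h
  have ht₀' : |e t₀| < 1 :=
    lt_of_le_of_ne (le_trans (by simpa using e.norm_coe_le_norm t₀) hmem) ht₀
  set g : C(X, ℝ) := (1 : C(X, ℝ)) - |e| with hg
  have hgapp : ∀ t, g t = 1 - |e t| := fun t => by simp [hg]
  have hbound : ∀ t, |e t| ≤ 1 := fun t => le_trans (by simpa using e.norm_coe_le_norm t) hmem
  have h1 : ‖e + g‖ ≤ 1 := by
    refine ((e + g).norm_le zero_le_one).2 (fun t => ?_)
    simp only [ContinuousMap.add_apply, hgapp, Real.norm_eq_abs]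
    rcases abs_cases (e t) with ⟨ha, hb⟩ | ⟨ha, hb⟩ <;> rcases abs_cases (e t + (1 - |e t|)) with
      ⟨hc, hd⟩ | ⟨hc, hd⟩ <;> nlinarith [hbound t]
  have h2 : ‖e - g‖ ≤ 1 := by
    refine ((e - g).norm_le zero_le_one).2 (fun t => ?_)
    simp only [ContinuousMap.sub_apply, hgapp, Real.norm_eq_abs]
    rcases abs_cases (e t) with ⟨ha, hb⟩ | ⟨ha, hb⟩ <;> rcases abs_cases (e t - (1 - |e t|)) with
      ⟨hc, hd⟩ | ⟨hc, hd⟩ <;> nlinarith [hbound t]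
  have hseg : e ∈ openSegment ℝ (e + g) (e - g) := by
    refine ⟨1/2, 1/2, by norm_num, by norm_num, by norm_num, ?_⟩
    ext t
    simp only [ContinuousMap.add_apply, ContinuousMap.sub_apply, ContinuousMap.smul_apply,
      smul_eq_mul]
    ring
  have := hext (e + g) (by rwa [Metric.mem_closedBall, dist_zero_right]) (e - g)
    (by rwa [Metric.mem_closedBall, dist_zero_right]) hseg
  have hg0 : g = 0 := by
    have := this.1
    have h' : e + g - e = e - e := by rw [this]
    simpa using h'
  have := hgapp t₀
  rw [hg0] at this
  simp only [ContinuousMap.zero_apply] at this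
  linarith

/-- If |e t| = 1 everywhere then e is extreme. -/
private lemma extreme_of_ptwise (e : C(X, ℝ)) (hpt : ∀ t, |e t| = 1) :
    e ∈ Set.extremePoints ℝ (Metric.closedBall (0 : C(X, ℝ)) 1) := by
  refine mem_extremePoints.2 ⟨?_, ?_⟩
  · rw [Metric.mem_closedBall, dist_zero_right]
    exact (e.norm_le zero_le_one).2 (fun t => by simpa using (hpt t).le)
  · intro x hx y hy hseg
    rw [Metric.mem_closedBall, dist_zero_right] at hx hy
    obtain ⟨a, b, ha, hb, hab, habe⟩ := hseg
    have key : ∀ t, x t = e t ∧ y t = e t := by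
      intro t
      have hxe : a * x t + b * y t = e t := by
        have := congrArg (fun f : C(X, ℝ) => f t) habe
        simpa using this
      have hxt : |x t| ≤ 1 := le_trans (by simpa using x.norm_coe_le_norm t) hx
      have hyt : |y t| ≤ 1 := le_trans (by simpa using y.norm_coe_le_norm t) hy
      have het := hpt t
      rcases abs_cases (e t) with ⟨h1, -⟩ | ⟨h1, -⟩ <;>
        rcases abs_le.1 hxt with ⟨hx1, hx2⟩ <;>
        rcases abs_le.1 hyt with ⟨hy1, hy2⟩ <;>
        constructor <;> nlinarith
    exact ⟨ContinuousMap.ext (fun t => (key t).1), ContinuousMap.ext (fun t => (key t).2)⟩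

/-- If |e t| = 1 everywhere then for every norm-one f, one of ‖e±f‖ is 2. -/
private lemma max2_of_ptwise [Nonempty X] (e : C(X, ℝ)) (he : ‖e‖ = 1) (hpt : ∀ t, |e t| = 1) :
    ∀ f : C(X, ℝ), ‖f‖ = 1 → (‖e + f‖ = 2 ∨ ‖e - f‖ = 2) := by
  intro f hf
  obtain ⟨t, ht⟩ := exists_norm_attain f
  have hft : |f t| = 1 := by rw [← Real.norm_eq_abs, ← ht, hf]
  have hle1 : ‖e + f‖ ≤ 2 := le_trans (norm_add_le _ _) (by rw [he, hf]; norm_num)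
  have hle2 : ‖e - f‖ ≤ 2 := le_trans (norm_sub_le _ _) (by rw [he, hf]; norm_num)
  have het := hpt t
  rcases abs_cases (e t) with ⟨h1, -⟩ | ⟨h1, -⟩ <;>
      rcases abs_cases (f t) with ⟨h2, -⟩ | ⟨h2, -⟩ <;>
      [left; right; right; left] <;>
      [skip; skip; skip; skip] <;>
      first
      | (refine le_antisymm hle1 ?_
         calc (2 : ℝ) = ‖(e + f) t‖ := by
                simp only [ContinuousMap.add_apply, Real.norm_eq_abs]
                rw [abs_of_nonneg (by linarith)] <;> linarith
           _ ≤ ‖e + f‖ := (e + f).norm_coe_le_norm t)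
      | (refine le_antisymm hle1 ?_
         calc (2 : ℝ) = ‖(e + f) t‖ := by
                simp only [ContinuousMap.add_apply, Real.norm_eq_abs]
                rw [abs_of_nonpos (by linarith)] <;> linarith
           _ ≤ ‖e + f‖ := (e + f).norm_coe_le_norm t)
      | (refine le_antisymm hle2 ?_
         calc (2 : ℝ) = ‖(e - f) t‖ := by
                simp only [ContinuousMap.sub_apply, Real.norm_eq_abs]
                rw [abs_of_nonneg (by linarith)] <;> linarith
           _ ≤ ‖e - f‖ := (e - f).norm_coe_le_norm t)
      | (refine le_antisymm hle2 ?_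
         calc (2 : ℝ) = ‖(e - f) t‖ := by
                simp only [ContinuousMap.sub_apply, Real.norm_eq_abs]
                rw [abs_of_nonpos (by linarith)] <;> linarith
           _ ≤ ‖e - f‖ := (e - f).norm_coe_le_norm t)

/-- Conversely, the max-2 property forces |e t| = 1 everywhere. -/
private lemma ptwise_of_max2 (e : C(X, ℝ)) (he : ‖e‖ = 1)
    (h : ∀ f : C(X, ℝ), ‖f‖ = 1 → (‖e + f‖ = 2 ∨ ‖e - f‖ = 2)) :
    ∀ t, |e t| = 1 := by
  intro t₀
  by_contra hne
  have hbound : ∀ t, |e t| ≤ 1 := fun t => by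
    have := e.norm_coe_le_norm t; rw [he] at this; simpa using this
  have ht₀ : |e t₀| < 1 := lt_of_le_of_ne (hbound t₀) hne
  set δ : ℝ := 1 - |e t₀| with hδ
  have hδpos : 0 < δ := by simp [hδ]; linarith
  have hδ1 : δ ≤ 1 := by rw [hδ]; linarith [abs_nonneg (e t₀)]
  -- Urysohn bump at t₀, vanishing where |e| is large
  have hC : IsClosed {t : X | 1 - δ/2 ≤ |e t|} := by
    have : Continuous fun t => |e t| := by fun_prop
    exact isClosed_le continuous_const this
  have hD : IsClosed ({t₀} : Set X) := isClosed_singleton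
  have hdisj : Disjoint {t : X | 1 - δ/2 ≤ |e t|} ({t₀} : Set X) := by
    rw [Set.disjoint_singleton_right]
    intro hmem
    simp only [Set.mem_setOf_eq] at hmem
    rw [hδ] at hmem; linarith
  obtain ⟨f, hf0, hf1, hf01⟩ := exists_continuous_zero_one_of_isClosed hC hD hdisj
  have hfnorm : ‖f‖ = 1 := by
    refine le_antisymm ((f.norm_le zero_le_one).2 (fun t => by
      rcases hf01 t with ⟨h1, h2⟩; simp [Real.norm_eq_abs, abs_le]; constructor <;> linarith)) ?_
    have : f t₀ = 1 := hf1 rfl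
    calc (1 : ℝ) = ‖f t₀‖ := by rw [this]; simp
    _ ≤ ‖f‖ := f.norm_coe_le_norm t₀
  have hb : ∀ t, |e t + f t| ≤ 2 - δ/2 ∧ |e t - f t| ≤ 2 - δ/2 := by
    intro t
    rcases le_or_gt (1 - δ/2) (|e t|) with hc | hc
    · have : f t = 0 := hf0 hc
      rw [this]
      have := hbound t
      constructor <;> simp only [add_zero, sub_zero] <;> linarith
    · rcases hf01 t with ⟨h1, h2⟩
      rcases abs_le.1 (le_of_lt hc) with ⟨hl, hr⟩
      constructor <;> rw [abs_le] <;> constructor <;> linarith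
  have h1 : ‖e + f‖ ≤ 2 - δ/2 := by
    refine ((e + f).norm_le (by linarith)).2 (fun t => ?_)
    simpa [Real.norm_eq_abs] using (hb t).1
  have h2 : ‖e - f‖ ≤ 2 - δ/2 := by
    refine ((e - f).norm_le (by linarith)).2 (fun t => ?_)
    simpa [Real.norm_eq_abs] using (hb t).2
  rcases h f hfnorm with h3 | h3
  · rw [h3] at h1; linarith
  · rw [h3] at h2; linarith

/-- The phase-invariant characterization of extreme points of the unit ball. -/
private lemma extreme_iff_max2 [Nonempty X] (e : C(X, ℝ)) (he : ‖e‖ = 1) :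
    e ∈ Set.extremePoints ℝ (Metric.closedBall (0 : C(X, ℝ)) 1) ↔
      ∀ f : C(X, ℝ), ‖f‖ = 1 → (‖e + f‖ = 2 ∨ ‖e - f‖ = 2) := by
  constructor
  · intro hex
    exact max2_of_ptwise e he (ptwise_of_extreme e hex)
  · intro h
    exact extreme_of_ptwise e (ptwise_of_max2 e he h)

end Aux

theorem stmt8 {K Ω : Type*} [TopologicalSpace K] [CompactSpace K] [T2Space K]
    [TopologicalSpace Ω] [CompactSpace Ω] [T2Space Ω]
    (T : C(K, ℝ) → C(Ω, ℝ))
    (hmap : ∀ f : C(K, ℝ), ‖f‖ = 1 → ‖T f‖ = 1)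
    (hsurj : ∀ g : C(Ω, ℝ), ‖g‖ = 1 → ∃ f : C(K, ℝ), ‖f‖ = 1 ∧ T f = g)
    (hphase : ∀ f g : C(K, ℝ), ‖f‖ = 1 → ‖g‖ = 1 →
      ({‖T f + T g‖, ‖T f - T g‖} : Set ℝ) = {‖f + g‖, ‖f - g‖})
    (e : C(K, ℝ)) (he : ‖e‖ = 1) :
    T e ∈ Set.extremePoints ℝ (Metric.closedBall (0 : C(Ω, ℝ)) 1) ↔
      e ∈ Set.extremePoints ℝ (Metric.closedBall (0 : C(K, ℝ)) 1) := by
  have hK : Nonempty K := by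
    by_contra h
    rw [not_nonempty_iff] at h
    have : e = 0 := ContinuousMap.ext (fun t => (h.false t).elim)
    rw [this, norm_zero] at he; norm_num at he
  have hTe : ‖T e‖ = 1 := hmap e he
  have hΩ : Nonempty Ω := by
    by_contra h
    rw [not_nonempty_iff] at h
    have : T e = 0 := ContinuousMap.ext (fun t => (h.false t).elim)
    rw [this, norm_zero] at hTe; norm_num at hTe
  rw [extreme_iff_max2 (T e) hTe, extreme_iff_max2 e he]
  constructor
  · intro hT f hf
    have hphase' := hphase e f he hf
    have h2 : (2 : ℝ) ∈ ({‖T e + T f‖, ‖T e - T f‖} : Set ℝ) := by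
      rcases hT (T f) (hmap f hf) with h | h <;> simp [h.symm]
    rw [hphase'] at h2
    rcases h2 with h | h
    · left; exact h.symm
    · right; exact (Set.mem_singleton_iff.1 h).symm
  · intro hE g hg
    obtain ⟨f, hf, rfl⟩ := hsurj g hg
    have hphase' := hphase e f he hf
    have h2 : (2 : ℝ) ∈ ({‖e + f‖, ‖e - f‖} : Set ℝ) := by
      rcases hE f hf with h | h <;> simp [h.symm]
    rw [← hphase'] at h2
    rcases h2 with h | h
    · left; exact h.symm
    · right; exact (Set.mem_singleton_iff.1 h).symm
end

section
/- Let K, Ω be compact Hausdorff spaces, T : S_{C(K)} → S_{C(Ω)} a surjective phase-isometry, and σ : K → Ω the homeomorphism with T(F_t ∪ -F_t) = F_{σ(t)} ∪ -F_{σ(t)} for all t. Then for every t ∈ K and every f ∈ S_{C(K)}, T(f)(σ(t)) ∈ {f(t), -f(t)}. -/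
open Set

private lemma pair_max_eq {a b c d : ℝ} (h : ({a, b} : Set ℝ) = {c, d}) :
    max a b = max c d := by
  have key : ∀ x y u v : ℝ, ({x, y} : Set ℝ) = {u, v} → max x y ≤ max u v := by
    intro x y u v hxy
    have hx : x = u ∨ x = v := by
      have : x ∈ ({u, v} : Set ℝ) := hxy ▸ mem_insert x {y}
      simpa using this
    have hy : y = u ∨ y = v := by
      have : y ∈ ({u, v} : Set ℝ) := hxy ▸ mem_insert_of_mem x rfl
      simpa using this
    apply max_le
    · rcases hx with rfl | rfl
      · exact le_max_left _ _
      · exact le_max_right _ _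
    · rcases hy with rfl | rfl
      · exact le_max_left _ _
      · exact le_max_right _ _
  exact le_antisymm (key a b c d h) (key c d a b h.symm)

private lemma one_add_abs_le_max {b c : ℝ} (hc : |c| = 1) :
    1 + |b| ≤ max |b + c| |b - c| := by
  rcases (abs_eq zero_le_one).mp hc with h | h <;> subst h <;>
    rcases abs_cases b with ⟨h1, h2⟩ | ⟨h1, h2⟩ <;> rw [h1]
  · exact le_max_of_le_left (by have := le_abs_self (b + 1); linarith)
  · exact le_max_of_le_right (by have := neg_le_abs (b - 1); linarith)
  · exact le_max_of_le_right (by have := le_abs_self (b - -1); linarith)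
  · exact le_max_of_le_left (by have := neg_le_abs (b + -1); linarith)

private lemma urysohn_peak {X : Type*} [TopologicalSpace X] [CompactSpace X] [T2Space X]
    (f : C(X, ℝ)) (hf : ‖f‖ = 1) (x : X) (ε : ℝ) (hε : 0 < ε) :
    ∃ g : C(X, ℝ), ‖g‖ = 1 ∧ g x = 1 ∧
      ‖f + g‖ ≤ 1 + |f x| + ε ∧ ‖f - g‖ ≤ 1 + |f x| + ε := by
  set U : Set X := f ⁻¹' Metric.ball (f x) ε with hU
  have hUopen : IsOpen U := (Metric.isOpen_ball).preimage f.continuous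
  have hxU : x ∈ U := by simp [hU, hε]
  obtain ⟨g, hg0, hg1, hg01⟩ := exists_continuous_zero_one_of_isClosed
    (hUopen.isClosed_compl) (isClosed_singleton (x := x))
    (by simp [disjoint_singleton_right, hxU])
  have hgx : g x = 1 := hg1 rfl
  have hgle : ∀ s, |g s| ≤ 1 := fun s => by
    have := hg01 s; rw [abs_of_nonneg this.1]; exact this.2
  have hgnorm : ‖g‖ = 1 := by
    refine le_antisymm ((g.norm_le (by norm_num)).mpr (fun s => hgle s)) ?_
    calc (1:ℝ) = |g x| := by rw [hgx, abs_one]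
    _ ≤ ‖g‖ := g.norm_coe_le_norm x
  have hpos : (0:ℝ) ≤ 1 + |f x| + ε := by positivity
  have key : ∀ s : X, ∀ c : ℝ, |c| = 1 → |f s + c * g s| ≤ 1 + |f x| + ε := by
    intro s c hc
    by_cases hs : s ∈ U
    · have hfs : |f s| ≤ |f x| + ε := by
        have : |f s - f x| < ε := by simpa [hU, Real.dist_eq] using hs
        calc |f s| = |f x + (f s - f x)| := by ring_nf
        _ ≤ |f x| + |f s - f x| := abs_add_le _ _
        _ ≤ |f x| + ε := by linarith
      calc |f s + c * g s| ≤ |f s| + |c * g s| := abs_add_le _ _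
      _ ≤ (|f x| + ε) + 1 := by
          have : |c * g s| ≤ 1 := by rw [abs_mul, hc, one_mul]; exact hgle s
          linarith
      _ = 1 + |f x| + ε := by ring
    · have : g s = 0 := hg0 hs
      have hfs : |f s| ≤ 1 := by
        calc |f s| ≤ ‖f‖ := f.norm_coe_le_norm s
        _ = 1 := hf
      rw [this, mul_zero, add_zero]
      have : (0:ℝ) ≤ |f x| + ε := by positivity
      linarith
  refine ⟨g, hgnorm, hgx, ?_, ?_⟩
  · exact (ContinuousMap.norm_le _ hpos).mpr (fun s => by
      simpa using key s 1 (by norm_num))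
  · exact (ContinuousMap.norm_le _ hpos).mpr (fun s => by
      have := key s (-1) (by norm_num)
      simpa [sub_eq_add_neg] using this)

theorem stmt9 {K Ω : Type*} [TopologicalSpace K] [CompactSpace K] [T2Space K]
    [TopologicalSpace Ω] [CompactSpace Ω] [T2Space Ω]
    (T : C(K, ℝ) → C(Ω, ℝ))
    (hmap : ∀ f : C(K, ℝ), ‖f‖ = 1 → ‖T f‖ = 1)
    (hsurj : ∀ g : C(Ω, ℝ), ‖g‖ = 1 → ∃ f : C(K, ℝ), ‖f‖ = 1 ∧ T f = g)
    (hphase : ∀ f g : C(K, ℝ), ‖f‖ = 1 → ‖g‖ = 1 →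
      ({‖T f + T g‖, ‖T f - T g‖} : Set ℝ) = {‖f + g‖, ‖f - g‖})
    (σ : K ≃ₜ Ω)
    (hσ : ∀ t : K,
      T '' ({f : C(K, ℝ) | ‖f‖ = 1 ∧ f t = 1} ∪ -{f : C(K, ℝ) | ‖f‖ = 1 ∧ f t = 1}) =
        {g : C(Ω, ℝ) | ‖g‖ = 1 ∧ g (σ t) = 1} ∪
          -{g : C(Ω, ℝ) | ‖g‖ = 1 ∧ g (σ t) = 1}) :
    ∀ t : K, ∀ f : C(K, ℝ), ‖f‖ = 1 →
      T f (σ t) = f t ∨ T f (σ t) = -f t := by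
  intro t f hf
  set a : ℝ := f t with ha
  set b : ℝ := T f (σ t) with hb
  have hTf : ‖T f‖ = 1 := hmap f hf
  -- Step A : |b| ≤ |a|
  have stepA : |b| ≤ |a| := by
    refine le_of_forall_pos_le_add (fun ε hε => ?_)
    obtain ⟨g, hgnorm, hgt, hfg1, hfg2⟩ := urysohn_peak f hf t ε hε
    have hgmem : g ∈ ({h : C(K, ℝ) | ‖h‖ = 1 ∧ h t = 1} ∪
        -{h : C(K, ℝ) | ‖h‖ = 1 ∧ h t = 1}) := Or.inl ⟨hgnorm, hgt⟩
    have hTgmem : T g ∈ ({h : C(Ω, ℝ) | ‖h‖ = 1 ∧ h (σ t) = 1} ∪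
        -{h : C(Ω, ℝ) | ‖h‖ = 1 ∧ h (σ t) = 1}) := by
      rw [← hσ t]; exact ⟨g, hgmem, rfl⟩
    have hc : |T g (σ t)| = 1 := by
      rcases hTgmem with ⟨_, h2⟩ | hneg
      · rw [h2, abs_one]
      · rw [Set.mem_neg] at hneg
        have h2 := hneg.2
        rw [ContinuousMap.neg_apply] at h2
        have : T g (σ t) = -1 := by linarith
        rw [this]; norm_num
    have hmax : max ‖T f + T g‖ ‖T f - T g‖ = max ‖f + g‖ ‖f - g‖ :=
      pair_max_eq (hphase f g hf hgnorm)
    have h1 : 1 + |b| ≤ max ‖T f + T g‖ ‖T f - T g‖ := by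
      refine le_trans (one_add_abs_le_max hc) (max_le_max ?_ ?_)
      · exact (T f + T g).norm_coe_le_norm (σ t)
      · exact (T f - T g).norm_coe_le_norm (σ t)
    have h2 : max ‖f + g‖ ‖f - g‖ ≤ 1 + |a| + ε := max_le hfg1 hfg2
    rw [hmax] at h1
    linarith
  -- Step B : |a| ≤ |b|
  have stepB : |a| ≤ |b| := by
    refine le_of_forall_pos_le_add (fun ε hε => ?_)
    obtain ⟨h, hhnorm, hht, hfh1, hfh2⟩ := urysohn_peak (T f) hTf (σ t) ε hε
    have hhmem : h ∈ ({k : C(Ω, ℝ) | ‖k‖ = 1 ∧ k (σ t) = 1} ∪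
        -{k : C(Ω, ℝ) | ‖k‖ = 1 ∧ k (σ t) = 1}) := Or.inl ⟨hhnorm, hht⟩
    rw [← hσ t] at hhmem
    obtain ⟨g, hgmem, hTg⟩ := hhmem
    have hg : ‖g‖ = 1 ∧ |g t| = 1 := by
      rcases hgmem with ⟨h1, h2⟩ | hneg
      · exact ⟨h1, by rw [h2, abs_one]⟩
      · rw [Set.mem_neg] at hneg
        have h2 := hneg.2
        rw [ContinuousMap.neg_apply] at h2
        have hg2 : g t = -1 := by linarith
        have hn := hneg.1
        rw [norm_neg] at hn
        exact ⟨hn, by rw [hg2]; norm_num⟩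
    have hmax : max ‖T f + T g‖ ‖T f - T g‖ = max ‖f + g‖ ‖f - g‖ :=
      pair_max_eq (hphase f g hf hg.1)
    have h1 : 1 + |a| ≤ max ‖f + g‖ ‖f - g‖ := by
      refine le_trans (one_add_abs_le_max hg.2) (max_le_max ?_ ?_)
      · exact (f + g).norm_coe_le_norm t
      · exact (f - g).norm_coe_le_norm t
    have h2 : max ‖T f + T g‖ ‖T f - T g‖ ≤ 1 + |b| + ε := by
      rw [hTg]; exact max_le hfh1 hfh2
    rw [← hmax] at h1
    linarith
  have : |b| = |a| := le_antisymm stepA stepB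
  exact abs_eq_abs.mp this
end

section
/- Let K, Ω be compact Hausdorff spaces and T : S_{C(K)} → S_{C(Ω)} a surjective phase-isometry. Then there exist a homeomorphism φ : Ω → K and a continuous unimodular function h on Ω such that for every f ∈ S_{C(K)} there is θ ∈ {-1, 1} with T(f)(s) = θ h(s) f(φ(s)) for all s ∈ Ω. -/
open Set ContinuousMap

namespace Stmt10Aux

set_option linter.unusedSectionVars false

variable {X : Type*} [TopologicalSpace X] [CompactSpace X] [T2Space X]

/-- abs value at a point is at most the norm -/
lemma abs_le_norm (f : C(X, ℝ)) (x : X) : |f x| ≤ ‖f‖ := by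
  simpa [Real.norm_eq_abs] using f.norm_coe_le_norm x

lemma norm_le_iff (f : C(X, ℝ)) {C : ℝ} (hC : 0 ≤ C) : ‖f‖ ≤ C ↔ ∀ x, |f x| ≤ C := by
  simpa [Real.norm_eq_abs] using f.norm_le hC

/-- norm attained on nonempty compact -/
lemma exists_abs_eq_norm [Nonempty X] (f : C(X, ℝ)) : ∃ x, |f x| = ‖f‖ := by
  obtain ⟨x, -, hx⟩ := IsCompact.exists_isMaxOn isCompact_univ univ_nonempty
    (f.continuous.abs.continuousOn)
  replace hx : ∀ y, |f y| ≤ |f x| := fun y => hx (mem_univ y)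
  refine ⟨x, le_antisymm (abs_le_norm f x) ?_⟩
  rw [norm_le_iff f (abs_nonneg _)]
  exact hx

/-- Urysohn packaged: peak 1 at x, vanishing on closed C not containing x -/
lemma urysohn {C : Set X} (hC : IsClosed C) {x : X} (hx : x ∉ C) :
    ∃ u : C(X, ℝ), u x = 1 ∧ (∀ y ∈ C, u y = 0) ∧ (∀ y, u y ∈ Icc (0:ℝ) 1) ∧ ‖u‖ = 1 := by
  obtain ⟨u, hu0, hu1, huIcc⟩ := exists_continuous_zero_one_of_isClosed hC
    (isClosed_singleton (x := x)) (by simpa [Set.disjoint_singleton_right] using hx)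
  have hux : u x = 1 := hu1 rfl
  refine ⟨u, hux, fun y hy => hu0 hy, huIcc, le_antisymm ?_ ?_⟩
  · rw [norm_le_iff u zero_le_one]
    intro y
    have := huIcc y
    rw [abs_le]; constructor <;> linarith [this.1, this.2]
  · calc (1:ℝ) = |u x| := by rw [hux]; norm_num
    _ ≤ ‖u‖ := abs_le_norm u x

lemma pair_eq_maxmin {a b c d : ℝ} (h : ({a, b} : Set ℝ) = {c, d}) :
    max a b = max c d ∧ min a b = min c d := by
  have ha : a = c ∨ a = d := by
    have : a ∈ ({c, d} : Set ℝ) := h ▸ (by simp : a ∈ ({a, b} : Set ℝ))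
    simpa using this
  have hb : b = c ∨ b = d := by
    have : b ∈ ({c, d} : Set ℝ) := h ▸ (by simp : b ∈ ({a, b} : Set ℝ))
    simpa using this
  have hc : c = a ∨ c = b := by
    have : c ∈ ({a, b} : Set ℝ) := h ▸ (by simp : c ∈ ({c, d} : Set ℝ))
    simpa using this
  have hd : d = a ∨ d = b := by
    have : d ∈ ({a, b} : Set ℝ) := h ▸ (by simp : d ∈ ({c, d} : Set ℝ))
    simpa using this
  constructor
  · apply le_antisymm
    · apply max_le
      · rcases ha with h | h <;> rw [h] <;> [exact le_max_left c d; exact le_max_right c d]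
      · rcases hb with h | h <;> rw [h] <;> [exact le_max_left c d; exact le_max_right c d]
    · apply max_le
      · rcases hc with h | h <;> rw [h] <;> [exact le_max_left a b; exact le_max_right a b]
      · rcases hd with h | h <;> rw [h] <;> [exact le_max_left a b; exact le_max_right a b]
  · apply le_antisymm
    · apply le_min
      · rcases hc with h | h <;> rw [h] <;> [exact min_le_left a b; exact min_le_right a b]
      · rcases hd with h | h <;> rw [h] <;> [exact min_le_left a b; exact min_le_right a b]
    · apply le_min
      · rcases ha with h | h <;> rw [h] <;> [exact min_le_left c d; exact min_le_right c d]
      · rcases hb with h | h <;> rw [h] <;> [exact min_le_left c d; exact min_le_right c d]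

/-- peak set -/
def Pk (f : C(X, ℝ)) : Set X := {x | |f x| = 1}

lemma isClosed_Pk (f : C(X, ℝ)) : IsClosed (Pk f) :=
  isClosed_eq (f.continuous.abs) continuous_const

lemma Pk_nonempty [Nonempty X] {f : C(X, ℝ)} (hf : ‖f‖ = 1) : (Pk f).Nonempty := by
  obtain ⟨x, hx⟩ := exists_abs_eq_norm f
  exact ⟨x, by rw [Pk, mem_setOf_eq, hx, hf]⟩

/-- shares a peak point -/
def Sh (f g : C(X, ℝ)) : Prop := ∃ x, |f x| = 1 ∧ |g x| = 1

lemma sh_iff_max {f g : C(X, ℝ)} (hf : ‖f‖ = 1) (hg : ‖g‖ = 1) :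
    Sh f g ↔ max ‖f + g‖ ‖f - g‖ = 2 := by
  have hN : Nonempty X := by
    by_contra hempty
    rw [not_nonempty_iff] at hempty
    have : ‖f‖ ≤ 0 := (norm_le_iff f le_rfl).2 (fun x => isEmptyElim x)
    rw [hf] at this; linarith
  have hle : ∀ (p q : C(X,ℝ)), ‖p‖ = 1 → ‖q‖ = 1 → ‖p + q‖ ≤ 2 := fun p q hp hq => by
    calc ‖p + q‖ ≤ ‖p‖ + ‖q‖ := norm_add_le _ _
    _ = 2 := by rw [hp, hq]; norm_num
  constructor
  · rintro ⟨x, hfx, hgx⟩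
    have h1 : f x = 1 ∨ f x = -1 := (abs_eq zero_le_one).1 hfx
    have h2 : g x = 1 ∨ g x = -1 := (abs_eq zero_le_one).1 hgx
    rcases h1 with h1 | h1 <;> rcases h2 with h2 | h2
    · have : (2:ℝ) ≤ ‖f + g‖ := by
        calc (2:ℝ) = |(f + g) x| := by simp [h1, h2]; norm_num
        _ ≤ ‖f + g‖ := abs_le_norm _ x
      have := hle f g hf hg
      have : ‖f + g‖ = 2 := le_antisymm ‹‖f+g‖ ≤ 2› ‹2 ≤ ‖f+g‖›
      rw [max_eq_left]; exact this
      rw [this]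
      calc ‖f - g‖ ≤ ‖f‖ + ‖g‖ := norm_sub_le _ _
      _ = 2 := by rw [hf, hg]; norm_num
    · have h2' : (2:ℝ) ≤ ‖f - g‖ := by
        calc (2:ℝ) = |(f - g) x| := by simp [h1, h2]; norm_num
        _ ≤ ‖f - g‖ := abs_le_norm _ x
      have hub : ‖f - g‖ ≤ 2 := by
        calc ‖f - g‖ ≤ ‖f‖ + ‖g‖ := norm_sub_le _ _
        _ = 2 := by rw [hf, hg]; norm_num
      rw [max_eq_right]; exact le_antisymm hub h2'
      rw [le_antisymm hub h2']; exact hle f g hf hg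
    · have h2' : (2:ℝ) ≤ ‖f - g‖ := by
        calc (2:ℝ) = |(f - g) x| := by simp [h1, h2]; norm_num
        _ ≤ ‖f - g‖ := abs_le_norm _ x
      have hub : ‖f - g‖ ≤ 2 := by
        calc ‖f - g‖ ≤ ‖f‖ + ‖g‖ := norm_sub_le _ _
        _ = 2 := by rw [hf, hg]; norm_num
      rw [max_eq_right]; exact le_antisymm hub h2'
      rw [le_antisymm hub h2']; exact hle f g hf hg
    · have : (2:ℝ) ≤ ‖f + g‖ := by
        calc (2:ℝ) = |(f + g) x| := by simp [h1, h2]; norm_num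
        _ ≤ ‖f + g‖ := abs_le_norm _ x
      have hub := hle f g hf hg
      have heq : ‖f + g‖ = 2 := le_antisymm hub this
      rw [max_eq_left]; exact heq
      rw [heq]
      calc ‖f - g‖ ≤ ‖f‖ + ‖g‖ := norm_sub_le _ _
      _ = 2 := by rw [hf, hg]; norm_num
  · intro hmax
    rcases max_cases ‖f + g‖ ‖f - g‖ with ⟨h1, -⟩ | ⟨h1, -⟩
    · rw [h1] at hmax
      obtain ⟨x, hx⟩ := exists_abs_eq_norm (f + g)
      rw [hmax] at hx
      have hfx := abs_le_norm f x; rw [hf] at hfx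
      have hgx := abs_le_norm g x; rw [hg] at hgx
      have hsum : |f x + g x| = 2 := by simpa using hx
      have h1' : |f x + g x| ≤ |f x| + |g x| := abs_add_le _ _
      refine ⟨x, by linarith [abs_nonneg (f x), abs_nonneg (g x)], by linarith⟩
    · rw [h1] at hmax
      obtain ⟨x, hx⟩ := exists_abs_eq_norm (f - g)
      rw [hmax] at hx
      have hfx := abs_le_norm f x; rw [hf] at hfx
      have hgx := abs_le_norm g x; rw [hg] at hgx
      have hsum : |f x - g x| = 2 := by simpa using hx
      have h1' : |f x - g x| ≤ |f x| + |g x| := abs_sub _ _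
      refine ⟨x, by linarith, by linarith⟩

end Stmt10Aux

namespace Stmt10Aux
set_option linter.unusedSectionVars false
variable {X : Type*} [TopologicalSpace X] [CompactSpace X] [T2Space X]

/-- If h shares a peak with everything f shares a peak with... conversely:
if not Pk h ⊆ Pk f, produce a witness k with Sh h k but ¬ Sh f k. -/
lemma pk_subset_of_sh {h f : C(X, ℝ)} (hf : ‖f‖ = 1)
    (H : ∀ k : C(X, ℝ), ‖k‖ = 1 → Sh h k → Sh f k) : Pk h ⊆ Pk f := by
  intro x hx
  by_contra hxf
  obtain ⟨u, hux, hu0, -, hunorm⟩ := urysohn (isClosed_Pk f) hxf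
  obtain ⟨y, hfy, huy⟩ := H u hunorm ⟨x, hx, by rw [hux]; norm_num⟩
  have : u y = 0 := hu0 y hfy
  rw [this] at huy; norm_num at huy

lemma sh_of_pk_subset {h f k : C(X, ℝ)} (hsub : Pk h ⊆ Pk f) (hk : Sh h k) : Sh f k := by
  obtain ⟨x, hx, hkx⟩ := hk
  exact ⟨x, hsub hx, hkx⟩

end Stmt10Aux

namespace Stmt10Main
open Stmt10Aux
set_option linter.unusedSectionVars false

variable {K Ω : Type*} [TopologicalSpace K] [CompactSpace K] [T2Space K]
    [TopologicalSpace Ω] [CompactSpace Ω] [T2Space Ω]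
    (T : C(K, ℝ) → C(Ω, ℝ))
    (hmap : ∀ f : C(K, ℝ), ‖f‖ = 1 → ‖T f‖ = 1)
    (hsurj : ∀ g : C(Ω, ℝ), ‖g‖ = 1 → ∃ f : C(K, ℝ), ‖f‖ = 1 ∧ T f = g)
    (hphase : ∀ f g : C(K, ℝ), ‖f‖ = 1 → ‖g‖ = 1 →
      ({‖T f + T g‖, ‖T f - T g‖} : Set ℝ) = {‖f + g‖, ‖f - g‖})

include T hmap hsurj hphase

lemma key_max {f g : C(K, ℝ)} (hf : ‖f‖ = 1) (hg : ‖g‖ = 1) :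
    max ‖T f + T g‖ ‖T f - T g‖ = max ‖f + g‖ ‖f - g‖ :=
  (pair_eq_maxmin (hphase f g hf hg)).1

lemma key_min {f g : C(K, ℝ)} (hf : ‖f‖ = 1) (hg : ‖g‖ = 1) :
    min ‖T f + T g‖ ‖T f - T g‖ = min ‖f + g‖ ‖f - g‖ :=
  (pair_eq_maxmin (hphase f g hf hg)).2

lemma sh_iff {f g : C(K, ℝ)} (hf : ‖f‖ = 1) (hg : ‖g‖ = 1) :
    Sh (T f) (T g) ↔ Sh f g := by
  rw [sh_iff_max (hmap f hf) (hmap g hg), sh_iff_max hf hg, key_max T hmap hsurj hphase hf hg]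

/-- transfer of peak-set inclusion through T -/
lemma pk_trans {f h' : C(K, ℝ)} (hf : ‖f‖ = 1) (hh' : ‖h'‖ = 1)
    (hsub : Pk h' ⊆ Pk f) : Pk (T h') ⊆ Pk (T f) := by
  apply pk_subset_of_sh (hmap f hf)
  intro k' hk' hshk'
  obtain ⟨k, hk, rfl⟩ := hsurj k' hk'
  exact (sh_iff T hmap hsurj hphase hf hk).2
    (sh_of_pk_subset hsub ((sh_iff T hmap hsurj hphase hh' hk).1 hshk'))

/-- reverse transfer -/
lemma pk_trans_rev {f h' : C(K, ℝ)} (hf : ‖f‖ = 1) (hh' : ‖h'‖ = 1)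
    (hsub : Pk (T h') ⊆ Pk (T f)) : Pk h' ⊆ Pk f := by
  apply pk_subset_of_sh hf
  intro k hk hshk
  exact (sh_iff T hmap hsurj hphase hf hk).1
    (sh_of_pk_subset hsub ((sh_iff T hmap hsurj hphase hh' hk).2 hshk))

end Stmt10Main

namespace Stmt10Aux
set_option linter.unusedSectionVars false
variable {X : Type*} [TopologicalSpace X] [CompactSpace X] [T2Space X]

/-- midpoint trick: combination of two functions peaking at s -/
lemma midpoint_peak {p q : C(X, ℝ)} (hp : ‖p‖ = 1) (hq : ‖q‖ = 1) {s : X}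
    (hps : |p s| = 1) (hqs : |q s| = 1) :
    ∃ r : C(X, ℝ), ‖r‖ = 1 ∧ |r s| = 1 ∧ Pk r ⊆ Pk p ∩ Pk q := by
  refine ⟨(2⁻¹ : ℝ) • (p s • p + q s • q), ?_, ?_, ?_⟩
  case _ =>
    -- norm = 1
    apply le_antisymm
    · rw [norm_le_iff _ zero_le_one]
      intro y
      have h1 := abs_le_norm p y; rw [hp] at h1
      have h2 := abs_le_norm q y; rw [hq] at h2
      simp only [ContinuousMap.smul_apply, ContinuousMap.add_apply, smul_eq_mul]
      rw [abs_mul]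
      calc |2⁻¹| * |p s * p y + q s * q y| ≤ 2⁻¹ * (|p s * p y| + |q s * q y|) := by
            rw [abs_of_pos (by norm_num : (0:ℝ) < 2⁻¹)]
            have := abs_add_le (p s * p y) (q s * q y)
            linarith
      _ ≤ 2⁻¹ * (1 * 1 + 1 * 1) := by
            rw [abs_mul, abs_mul, hps, hqs]
            have := abs_nonneg (p y); have := abs_nonneg (q y)
            nlinarith
      _ = 1 := by norm_num
    · have : |((2⁻¹ : ℝ) • (p s • p + q s • q)) s| = 1 := by
        simp only [ContinuousMap.smul_apply, ContinuousMap.add_apply, smul_eq_mul]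
        have : p s * p s = 1 := by nlinarith [sq_abs (p s), hps]
        have hq2 : q s * q s = 1 := by nlinarith [sq_abs (q s), hqs]
        rw [this, hq2]; norm_num
      calc (1:ℝ) = |((2⁻¹ : ℝ) • (p s • p + q s • q)) s| := this.symm
      _ ≤ _ := abs_le_norm _ s
  case _ =>
    simp only [ContinuousMap.smul_apply, ContinuousMap.add_apply, smul_eq_mul]
    have h1 : p s * p s = 1 := by nlinarith [sq_abs (p s), hps]
    have h2 : q s * q s = 1 := by nlinarith [sq_abs (q s), hqs]
    rw [h1, h2]; norm_num
  case _ =>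
    intro y hy
    simp only [Pk, mem_setOf_eq, ContinuousMap.smul_apply, ContinuousMap.add_apply,
      smul_eq_mul] at hy
    have h1 := abs_le_norm p y; rw [hp] at h1
    have h2 := abs_le_norm q y; rw [hq] at h2
    have e1 : |p s * p y| = |p y| := by rw [abs_mul, hps, one_mul]
    have e2 : |q s * q y| = |q y| := by rw [abs_mul, hqs, one_mul]
    have key : |p y| = 1 ∧ |q y| = 1 := by
      have habs : |p s * p y + q s * q y| ≤ |p y| + |q y| := by
        calc |p s * p y + q s * q y| ≤ |p s * p y| + |q s * q y| := abs_add_le _ _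
        _ = |p y| + |q y| := by rw [e1, e2]
      have : |2⁻¹ * (p s * p y + q s * q y)| = 1 := hy
      rw [abs_mul, abs_of_pos (by norm_num : (0:ℝ) < 2⁻¹)] at this
      constructor <;> nlinarith
    exact ⟨key.1, key.2⟩

end Stmt10Aux

namespace Stmt10Aux
set_option linter.unusedSectionVars false
variable {X : Type*} [TopologicalSpace X] [CompactSpace X] [T2Space X]

lemma norm_const_one [Nonempty X] : ‖(ContinuousMap.const X (1:ℝ))‖ = 1 := by
  apply le_antisymm
  · rw [norm_le_iff _ zero_le_one]; intro x; simp
  · calc (1:ℝ) = |(ContinuousMap.const X (1:ℝ)) (Classical.arbitrary X)| := by simp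
    _ ≤ _ := abs_le_norm _ _

lemma abs_add_abs_le_max (a b : ℝ) : |a| + |b| ≤ max |a + b| |a - b| := by
  rcases le_total 0 a with ha | ha <;> rcases le_total 0 b with hb | hb
  · rw [abs_of_nonneg ha, abs_of_nonneg hb]
    exact le_trans (le_abs_self _) (le_max_left _ _)
  · rw [abs_of_nonneg ha, abs_of_nonpos hb]
    calc a + -b = a - b := by ring
    _ ≤ |a - b| := le_abs_self _
    _ ≤ _ := le_max_right _ _
  · rw [abs_of_nonpos ha, abs_of_nonneg hb]
    calc -a + b = -(a - b) := by ring
    _ ≤ |a - b| := neg_le_abs _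
    _ ≤ _ := le_max_right _ _
  · rw [abs_of_nonpos ha, abs_of_nonpos hb]
    calc -a + -b = -(a + b) := by ring
    _ ≤ |a + b| := neg_le_abs _
    _ ≤ _ := le_max_left _ _

lemma abs_add_le_max_norm (p q : C(X, ℝ)) (x : X) :
    |p x| + |q x| ≤ max ‖p + q‖ ‖p - q‖ := by
  calc |p x| + |q x| ≤ max |p x + q x| |p x - q x| := abs_add_abs_le_max _ _
  _ ≤ max ‖p + q‖ ‖p - q‖ := by
      apply max_le_max
      · simpa using abs_le_norm (p + q) x
      · simpa using abs_le_norm (p - q) x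

end Stmt10Aux

namespace Stmt10Main
open Stmt10Aux
set_option linter.unusedSectionVars false

variable {K Ω : Type*} [TopologicalSpace K] [CompactSpace K] [T2Space K]
    [TopologicalSpace Ω] [CompactSpace Ω] [T2Space Ω]
    (T : C(K, ℝ) → C(Ω, ℝ))
    (hmap : ∀ f : C(K, ℝ), ‖f‖ = 1 → ‖T f‖ = 1)
    (hsurj : ∀ g : C(Ω, ℝ), ‖g‖ = 1 → ∃ f : C(K, ℝ), ‖f‖ = 1 ∧ T f = g)
    (hphase : ∀ f g : C(K, ℝ), ‖f‖ = 1 → ‖g‖ = 1 →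
      ({‖T f + T g‖, ‖T f - T g‖} : Set ℝ) = {‖f + g‖, ‖f - g‖})

include T hmap hsurj hphase

lemma phi_exists [Nonempty K] [Nonempty Ω] (s : Ω) :
    ∃ x : K, ∀ f : C(K, ℝ), ‖f‖ = 1 → (|f x| = 1 ↔ |T f s| = 1) := by
  have hne : Nonempty {f : C(K, ℝ) // ‖f‖ = 1 ∧ |T f s| = 1} := by
    obtain ⟨f₀, hf₀, hTf₀⟩ := hsurj (ContinuousMap.const Ω 1) norm_const_one
    exact ⟨⟨f₀, hf₀, by rw [hTf₀]; simp⟩⟩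
  have hdir : Directed (· ⊇ ·)
      (fun f : {f : C(K, ℝ) // ‖f‖ = 1 ∧ |T f s| = 1} => Pk f.1) := by
    rintro ⟨f, hf, hfs⟩ ⟨g, hg, hgs⟩
    obtain ⟨r, hr, hrs, hrsub⟩ := midpoint_peak (hmap f hf) (hmap g hg) hfs hgs
    obtain ⟨h', hh', hTh'⟩ := hsurj r hr
    refine ⟨⟨h', hh', by rw [hTh']; exact hrs⟩, ?_, ?_⟩
    · exact pk_trans_rev T hmap hsurj hphase hf hh'
        (by rw [hTh']; exact fun y hy => (hrsub hy).1)
    · exact pk_trans_rev T hmap hsurj hphase hg hh'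
        (by rw [hTh']; exact fun y hy => (hrsub hy).2)
  obtain ⟨x, hx⟩ := IsCompact.nonempty_iInter_of_directed_nonempty_isCompact_isClosed
    _ hdir (fun f => Pk_nonempty f.2.1)
    (fun f => (isClosed_Pk f.1).isCompact) (fun f => isClosed_Pk f.1)
  have hx' : ∀ f : C(K, ℝ), ‖f‖ = 1 → |T f s| = 1 → |f x| = 1 := by
    intro f hf hTfs
    exact mem_iInter.1 hx ⟨f, hf, hTfs⟩
  refine ⟨x, fun f hf => ⟨?_, hx' f hf⟩⟩
  intro hfx
  by_contra hTfs
  obtain ⟨g', hg's, hg'0, -, hg'norm⟩ := urysohn (isClosed_Pk (T f)) hTfs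
  obtain ⟨k, hk, hTk⟩ := hsurj g' hg'norm
  have hkx : |k x| = 1 := hx' k hk (by rw [hTk, hg's]; norm_num)
  have : Sh (T f) (T k) := (sh_iff T hmap hsurj hphase hf hk).2 ⟨x, hfx, hkx⟩
  obtain ⟨t, hfT, hkT⟩ := this
  rw [hTk] at hkT
  rw [hg'0 t hfT] at hkT; norm_num at hkT

lemma psi_exists [Nonempty K] [Nonempty Ω] (x : K) :
    ∃ s : Ω, ∀ f : C(K, ℝ), ‖f‖ = 1 → (|f x| = 1 ↔ |T f s| = 1) := by
  have hne : Nonempty {f : C(K, ℝ) // ‖f‖ = 1 ∧ |f x| = 1} :=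
    ⟨⟨ContinuousMap.const K 1, norm_const_one, by simp⟩⟩
  have hdir : Directed (· ⊇ ·)
      (fun f : {f : C(K, ℝ) // ‖f‖ = 1 ∧ |f x| = 1} => Pk (T f.1)) := by
    rintro ⟨f, hf, hfx⟩ ⟨g, hg, hgx⟩
    obtain ⟨r, hr, hrx, hrsub⟩ := midpoint_peak hf hg hfx hgx
    refine ⟨⟨r, hr, hrx⟩, ?_, ?_⟩
    · exact pk_trans T hmap hsurj hphase hf hr (fun y hy => (hrsub hy).1)
    · exact pk_trans T hmap hsurj hphase hg hr (fun y hy => (hrsub hy).2)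
  obtain ⟨s, hs⟩ := IsCompact.nonempty_iInter_of_directed_nonempty_isCompact_isClosed
    _ hdir (fun f => Pk_nonempty (hmap f.1 f.2.1))
    (fun f => (isClosed_Pk (T f.1)).isCompact) (fun f => isClosed_Pk (T f.1))
  have hs' : ∀ f : C(K, ℝ), ‖f‖ = 1 → |f x| = 1 → |T f s| = 1 := by
    intro f hf hfx
    exact mem_iInter.1 hs ⟨f, hf, hfx⟩
  refine ⟨s, fun f hf => ⟨hs' f hf, ?_⟩⟩
  intro hTfs
  by_contra hfx
  obtain ⟨k, hkx, hk0, -, hknorm⟩ := urysohn (isClosed_Pk f) hfx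
  have hks : |T k s| = 1 := hs' k hknorm (by rw [hkx]; norm_num)
  have : Sh f k := (sh_iff T hmap hsurj hphase hf hknorm).1 ⟨s, hTfs, hks⟩
  obtain ⟨y, hfy, hky⟩ := this
  rw [hk0 y hfy] at hky; norm_num at hky

end Stmt10Main

namespace Stmt10Main
open Set ContinuousMap Stmt10Aux
set_option linter.unusedSectionVars false

variable {K Ω : Type*} [TopologicalSpace K] [CompactSpace K] [T2Space K]
    [TopologicalSpace Ω] [CompactSpace Ω] [T2Space Ω]
    (T : C(K, ℝ) → C(Ω, ℝ))
    (hmap : ∀ f : C(K, ℝ), ‖f‖ = 1 → ‖T f‖ = 1)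
    (hsurj : ∀ g : C(Ω, ℝ), ‖g‖ = 1 → ∃ f : C(K, ℝ), ‖f‖ = 1 ∧ T f = g)
    (hphase : ∀ f g : C(K, ℝ), ‖f‖ = 1 → ‖g‖ = 1 →
      ({‖T f + T g‖, ‖T f - T g‖} : Set ℝ) = {‖f + g‖, ‖f - g‖})

include T hmap hsurj hphase

/-- the fundamental modulus identity -/
lemma star_eq (φ₀ : Ω → K)
    (hΦ : ∀ (s : Ω) (f : C(K, ℝ)), ‖f‖ = 1 → (|f (φ₀ s)| = 1 ↔ |T f s| = 1)) :
    ∀ (f : C(K, ℝ)), ‖f‖ = 1 → ∀ s : Ω, |T f s| = |f (φ₀ s)| := by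
  intro f hf s
  -- upper bound: |T f s| ≤ |f (φ₀ s)|
  have hub : |T f s| ≤ |f (φ₀ s)| := by
    by_contra hlt
    push_neg at hlt
    set c := |f (φ₀ s)| with hc
    set ε := (|T f s| - c) / 2 with hε
    have hεpos : 0 < ε := by simp only [hε]; linarith
    have hV : IsOpen {y : K | |f y| < c + ε} := by
      apply isOpen_lt (f.continuous.abs) continuous_const
    have hmem : φ₀ s ∈ {y : K | |f y| < c + ε} := by simp only [mem_setOf_eq]; linarith
    obtain ⟨g, hgx, hg0, hgIcc, hgnorm⟩ := urysohn hV.isClosed_compl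
      (by simpa using hmem : φ₀ s ∉ {y : K | |f y| < c + ε}ᶜ)
    have hTg : |T g s| = 1 := (hΦ s g hgnorm).1 (by rw [hgx]; norm_num)
    have hcεle : ∀ y : K, |f y| + |g y| ≤ 1 + c + ε := by
      intro y
      by_cases hy : y ∈ {y : K | |f y| < c + ε}
      · have := (hgIcc y).2
        have := (hgIcc y).1
        have h1 : |g y| ≤ 1 := by rw [abs_le]; constructor <;> linarith
        simp only [mem_setOf_eq] at hy
        linarith
      · have : g y = 0 := hg0 y hy
        rw [this]
        have := abs_le_norm f y; rw [hf] at this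
        simp only [abs_zero, add_zero]
        have hcnn : 0 ≤ c := abs_nonneg _
        linarith
    have hmaxb : max ‖f + g‖ ‖f - g‖ ≤ 1 + c + ε := by
      have hnn : (0:ℝ) ≤ 1 + c + ε := by
        have := abs_nonneg (f (φ₀ s)); simp only [hc]; linarith
      apply max_le
      · rw [norm_le_iff _ hnn]; intro y
        calc |(f + g) y| ≤ |f y| + |g y| := by simpa using abs_add_le (f y) (g y)
        _ ≤ _ := hcεle y
      · rw [norm_le_iff _ hnn]; intro y
        calc |(f - g) y| ≤ |f y| + |g y| := by simpa using abs_sub (f y) (g y)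
        _ ≤ _ := hcεle y
    have hchain : |T f s| + 1 ≤ 1 + c + ε := by
      calc |T f s| + 1 = |T f s| + |T g s| := by rw [hTg]
      _ ≤ max ‖T f + T g‖ ‖T f - T g‖ := abs_add_le_max_norm _ _ s
      _ = max ‖f + g‖ ‖f - g‖ := key_max T hmap hsurj hphase hf hgnorm
      _ ≤ 1 + c + ε := hmaxb
    simp only [hε] at hchain; linarith
  -- lower bound
  have hlb : |f (φ₀ s)| ≤ |T f s| := by
    by_contra hlt
    push_neg at hlt
    set c := |T f s| with hc
    set ε := (|f (φ₀ s)| - c) / 2 with hε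
    have hεpos : 0 < ε := by simp only [hε]; linarith
    have hV : IsOpen {t : Ω | |T f t| < c + ε} :=
      isOpen_lt ((T f).continuous.abs) continuous_const
    have hmem : s ∈ {t : Ω | |T f t| < c + ε} := by simp only [mem_setOf_eq]; linarith
    obtain ⟨g', hg's, hg'0, hg'Icc, hg'norm⟩ := urysohn hV.isClosed_compl
      (by simpa using hmem : s ∉ {t : Ω | |T f t| < c + ε}ᶜ)
    obtain ⟨k, hk, hTk⟩ := hsurj g' hg'norm
    have hkx : |k (φ₀ s)| = 1 := (hΦ s k hk).2 (by rw [hTk, hg's]; norm_num)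
    have hcεle : ∀ t : Ω, |T f t| + |T k t| ≤ 1 + c + ε := by
      intro t
      rw [hTk]
      by_cases ht : t ∈ {t : Ω | |T f t| < c + ε}
      · have h2 := (hg'Icc t).2
        have h1 := (hg'Icc t).1
        have hb : |g' t| ≤ 1 := by rw [abs_le]; constructor <;> linarith
        simp only [mem_setOf_eq] at ht
        linarith
      · rw [hg'0 t ht]
        have := abs_le_norm (T f) t; rw [hmap f hf] at this
        simp only [abs_zero, add_zero]
        have hcnn : 0 ≤ c := abs_nonneg _
        linarith
    have hmaxb : max ‖T f + T k‖ ‖T f - T k‖ ≤ 1 + c + ε := by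
      have hnn : (0:ℝ) ≤ 1 + c + ε := by
        have := abs_nonneg (T f s); simp only [hc]; linarith
      apply max_le
      · rw [norm_le_iff _ hnn]; intro t
        calc |(T f + T k) t| ≤ |T f t| + |T k t| := by simpa using abs_add_le (T f t) (T k t)
        _ ≤ _ := hcεle t
      · rw [norm_le_iff _ hnn]; intro t
        calc |(T f - T k) t| ≤ |T f t| + |T k t| := by simpa using abs_sub (T f t) (T k t)
        _ ≤ _ := hcεle t
    have hchain : |f (φ₀ s)| + 1 ≤ 1 + c + ε := by
      calc |f (φ₀ s)| + 1 = |f (φ₀ s)| + |k (φ₀ s)| := by rw [hkx]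
      _ ≤ max ‖f + k‖ ‖f - k‖ := abs_add_le_max_norm _ _ _
      _ = max ‖T f + T k‖ ‖T f - T k‖ := (key_max T hmap hsurj hphase hf hk).symm
      _ ≤ 1 + c + ε := hmaxb
    simp only [hε] at hchain; linarith
  exact le_antisymm hub hlb

/-- continuity of φ₀ -/
lemma phi_continuous (φ₀ : Ω → K)
    (hΦ : ∀ (s : Ω) (f : C(K, ℝ)), ‖f‖ = 1 → (|f (φ₀ s)| = 1 ↔ |T f s| = 1)) :
    Continuous φ₀ := by
  have hstar := star_eq T hmap hsurj hphase φ₀ hΦ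
  rw [continuous_iff_isClosed]
  intro C hC
  have key : φ₀ ⁻¹' C =
      ⋂ f : {f : C(K, ℝ) // ‖f‖ = 1 ∧ ∀ y ∈ C, f y = 0}, (⇑(T f.1)) ⁻¹' {0} := by
    ext s
    simp only [mem_preimage, mem_iInter, mem_singleton_iff]
    constructor
    · rintro hs ⟨f, hf, hf0⟩
      have h0 : f (φ₀ s) = 0 := hf0 _ hs
      have := hstar f hf s
      rw [h0, abs_zero, abs_eq_zero] at this
      exact this
    · intro hall
      by_contra hns
      obtain ⟨u, hux, hu0, -, hunorm⟩ := urysohn hC hns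
      have := hall ⟨u, hunorm, hu0⟩
      have h2 := hstar u hunorm s
      rw [this, hux] at h2
      norm_num at h2
  rw [key]
  exact isClosed_iInter (fun f => IsClosed.preimage (T f.1).continuous isClosed_singleton)

end Stmt10Main

namespace Stmt10Aux
set_option linter.unusedSectionVars false
variable {X : Type*} [TopologicalSpace X] [CompactSpace X] [T2Space X]

lemma norm_eq_of_abs_eq {p q : C(X, ℝ)} (h : ∀ y, |p y| = |q y|) : ‖p‖ = ‖q‖ := by
  apply le_antisymm
  · rw [norm_le_iff _ (norm_nonneg q)]
    intro y; rw [h y]; exact abs_le_norm q y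
  · rw [norm_le_iff _ (norm_nonneg p)]
    intro y; rw [← h y]; exact abs_le_norm p y

end Stmt10Aux

namespace Stmt10Main
open Set ContinuousMap Stmt10Aux
set_option linter.unusedSectionVars false

variable {K Ω : Type*} [TopologicalSpace K] [CompactSpace K] [T2Space K]
    [TopologicalSpace Ω] [CompactSpace Ω] [T2Space Ω]
    (T : C(K, ℝ) → C(Ω, ℝ))
    (hmap : ∀ f : C(K, ℝ), ‖f‖ = 1 → ‖T f‖ = 1)
    (hsurj : ∀ g : C(Ω, ℝ), ‖g‖ = 1 → ∃ f : C(K, ℝ), ‖f‖ = 1 ∧ T f = g)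
    (hphase : ∀ f g : C(K, ℝ), ‖f‖ = 1 → ‖g‖ = 1 →
      ({‖T f + T g‖, ‖T f - T g‖} : Set ℝ) = {‖f + g‖, ‖f - g‖})

include T hmap hsurj hphase

/-- pointwise dichotomy -/
lemma ptwise_sign [Nonempty K] (φ₀ : Ω → K)
    (hΦ : ∀ (s : Ω) (f : C(K, ℝ)), ‖f‖ = 1 → (|f (φ₀ s)| = 1 ↔ |T f s| = 1))
    {f : C(K, ℝ)} (hf : ‖f‖ = 1) (s : Ω) :
    T f s = T (ContinuousMap.const K 1) s * f (φ₀ s) ∨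
      T f s = -(T (ContinuousMap.const K 1) s * f (φ₀ s)) := by
  have hstar := star_eq T hmap hsurj hphase φ₀ hΦ
  have habs : |T (ContinuousMap.const K 1) s| = 1 := by
    rw [hstar _ norm_const_one s]; simp
  apply abs_eq_abs.1
  rw [abs_mul, habs, one_mul]
  exact hstar f hf s

/-- sign coherence for nonnegative functions -/
lemma nonneg_sign [Nonempty K] (φ₀ : Ω → K)
    (hΦ : ∀ (s : Ω) (f : C(K, ℝ)), ‖f‖ = 1 → (|f (φ₀ s)| = 1 ↔ |T f s| = 1))
    {g : C(K, ℝ)} (hg : ‖g‖ = 1) (hgnn : ∀ x, 0 ≤ g x) :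
    (∀ s, T g s = T (ContinuousMap.const K 1) s * g (φ₀ s)) ∨
      (∀ s, T g s = -(T (ContinuousMap.const K 1) s * g (φ₀ s))) := by
  set h := T (ContinuousMap.const K 1) with hh
  have hstar := star_eq T hmap hsurj hphase φ₀ hΦ
  have habs : ∀ s, |h s| = 1 := by
    intro s; rw [hh, hstar _ norm_const_one s]; simp
  by_cases hall : ∀ s, T g s = h s * g (φ₀ s)
  · exact Or.inl hall
  push_neg at hall
  obtain ⟨s₂, hs₂⟩ := hall
  have hE2 : T g s₂ = -(h s₂ * g (φ₀ s₂)) := by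
    rcases ptwise_sign T hmap hsurj hphase φ₀ hΦ hg s₂ with h' | h'
    · exact absurd h' hs₂
    · exact h'
  have hb : g (φ₀ s₂) ≠ 0 := by
    intro h0
    apply hs₂
    rw [hE2, h0]; ring
  right
  intro s₁
  by_contra hs₁
  have hE1 : T g s₁ = h s₁ * g (φ₀ s₁) := by
    rcases ptwise_sign T hmap hsurj hphase φ₀ hΦ hg s₁ with h' | h'
    · exact h'
    · exact absurd h' hs₁
  have ha : g (φ₀ s₁) ≠ 0 := by
    intro h0
    apply hs₁
    rw [hE1, h0]; ring
  -- contradiction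
  set a := g (φ₀ s₁) with hadef
  set b := g (φ₀ s₂) with hbdef
  have hapos : 0 < a := lt_of_le_of_ne (hgnn _) (Ne.symm ha)
  have hbpos : 0 < b := lt_of_le_of_ne (hgnn _) (Ne.symm hb)
  have hmin := key_min T hmap hsurj hphase hg norm_const_one
  have hgle1 : ∀ y, g y ≤ 1 := by
    intro y
    have := abs_le_norm g y; rw [hg] at this
    exact (abs_le.1 this).2
  -- RHS min ≤ 1
  have hrhs : ‖g - ContinuousMap.const K 1‖ ≤ 1 := by
    rw [norm_le_iff _ zero_le_one]
    intro y
    simp only [ContinuousMap.sub_apply, ContinuousMap.const_apply]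
    rw [abs_le]
    constructor <;> linarith [hgle1 y, hgnn y]
  have hL1 : (1 + a : ℝ) ≤ ‖T g + h‖ := by
    have : |(T g + h) s₁| = 1 + a := by
      simp only [ContinuousMap.add_apply]
      rw [hE1]
      have : h s₁ * a + h s₁ = h s₁ * (a + 1) := by ring
      rw [this, abs_mul, habs, one_mul, abs_of_pos (by linarith)]
      ring
    calc (1 + a : ℝ) = |(T g + h) s₁| := this.symm
    _ ≤ _ := abs_le_norm _ _
  have hL2 : (1 + b : ℝ) ≤ ‖T g - h‖ := by
    have : |(T g - h) s₂| = 1 + b := by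
      simp only [ContinuousMap.sub_apply]
      rw [hE2]
      have : -(h s₂ * b) - h s₂ = -(h s₂ * (b + 1)) := by ring
      rw [this, abs_neg, abs_mul, habs, one_mul, abs_of_pos (by linarith)]
      ring
    calc (1 + b : ℝ) = |(T g - h) s₂| := this.symm
    _ ≤ _ := abs_le_norm _ _
  have hcontra : min ‖T g + h‖ ‖T g - h‖ ≤ 1 := by
    rw [hmin]
    exact le_trans (min_le_right _ _) hrhs
  have : (1 + min a b : ℝ) ≤ min ‖T g + h‖ ‖T g - h‖ := by
    apply le_min
    · calc (1 + min a b : ℝ) ≤ 1 + a := by linarith [min_le_left a b]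
      _ ≤ _ := hL1
    · calc (1 + min a b : ℝ) ≤ 1 + b := by linarith [min_le_right a b]
      _ ≤ _ := hL2
  have : (0:ℝ) < min a b := lt_min hapos hbpos
  linarith

end Stmt10Main


namespace Stmt10Aux
set_option linter.unusedSectionVars false
variable {X : Type*} [TopologicalSpace X] [CompactSpace X] [T2Space X]

/-- generic sup-norm upper bound for a function plus a localized bump -/
lemma ub_helper {Y P : C(X, ℝ)} {W₁ W₂ : Set X} {ca cb δ σ : ℝ} (hδ : 0 ≤ δ)
    (hσ : σ = 1 ∨ σ = -1) (hca : |ca| ≤ 1) (hcb : |cb| ≤ 1)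
    (hY1 : ∀ s ∈ W₁, |Y s - ca| < δ) (hY2 : ∀ s ∈ W₂, |Y s - cb| < δ)
    (hYb : ∀ s, |Y s| ≤ 1)
    (hP : ∀ s, 0 ≤ P s ∧ P s ≤ 1) (hPout : ∀ s, s ∉ W₁ → s ∉ W₂ → P s = 0) :
    ‖Y + σ • P‖ ≤ max 1 (max |ca + σ| |cb + σ|) + δ := by
  have hM : (1:ℝ) ≤ max 1 (max |ca + σ| |cb + σ|) := le_max_left _ _
  rw [norm_le_iff _ (by linarith)]
  intro s
  simp only [ContinuousMap.add_apply, ContinuousMap.smul_apply, smul_eq_mul]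
  have key : ∀ c : ℝ, |c| ≤ 1 → |Y s - c| < δ →
      |Y s + σ * P s| ≤ max 1 (max |c + σ| (max |ca + σ| |cb + σ|)) + δ := by
    intro c hc hYc
    have hPs := hP s
    have habs : |c + σ * P s| ≤ max |c| |c + σ| := by
      rcases hσ with rfl | rfl
      · have h1 : c ≤ c + 1 * P s := by linarith [hPs.1]
        have h2 : c + 1 * P s ≤ c + 1 := by linarith [hPs.2]
        exact abs_le_max_abs_abs h1 h2
      · have h1 : c + -1 ≤ c + -1 * P s := by linarith [hPs.2]
        have h2 : c + -1 * P s ≤ c := by linarith [hPs.1]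
        calc |c + -1 * P s| ≤ max |c + -1| |c| := abs_le_max_abs_abs h1 h2
        _ = max |c| |c + -1| := max_comm _ _
    have e : Y s + σ * P s = (c + σ * P s) + (Y s - c) := by ring
    calc |Y s + σ * P s| ≤ |c + σ * P s| + |Y s - c| := by rw [e]; exact abs_add_le _ _
    _ ≤ max |c| |c + σ| + δ := by linarith [habs]
    _ ≤ max 1 (max |c + σ| (max |ca + σ| |cb + σ|)) + δ := by
        have : max |c| |c + σ| ≤ max 1 (max |c + σ| (max |ca + σ| |cb + σ|)) := by
          apply max_le
          · exact le_trans hc (le_max_left _ _)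
          · exact le_trans (le_max_left _ (max |ca + σ| |cb + σ|)) (le_max_right 1 _)
        linarith
  by_cases h1 : s ∈ W₁
  · have := key ca hca (hY1 s h1)
    calc |Y s + σ * P s| ≤ max 1 (max |ca + σ| (max |ca + σ| |cb + σ|)) + δ := this
    _ ≤ max 1 (max |ca + σ| |cb + σ|) + δ := by
        have : max |ca + σ| (max |ca + σ| |cb + σ|) = max |ca + σ| |cb + σ| := by
          rw [max_eq_right (le_max_left _ _)]
        rw [this]
  by_cases h2 : s ∈ W₂
  · have := key cb hcb (hY2 s h2)
    calc |Y s + σ * P s| ≤ max 1 (max |cb + σ| (max |ca + σ| |cb + σ|)) + δ := this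
    _ ≤ max 1 (max |ca + σ| |cb + σ|) + δ := by
        have : max |cb + σ| (max |ca + σ| |cb + σ|) = max |ca + σ| |cb + σ| := by
          rw [max_eq_right (le_max_right _ _)]
        rw [this]
  · rw [hPout s h1 h2, mul_zero, add_zero]
    calc |Y s| ≤ 1 := hYb s
    _ ≤ _ := by linarith

end Stmt10Aux

namespace Stmt10Main
open Set ContinuousMap Stmt10Aux
set_option linter.unusedSectionVars false

variable {K Ω : Type*} [TopologicalSpace K] [CompactSpace K] [T2Space K]
    [TopologicalSpace Ω] [CompactSpace Ω] [T2Space Ω]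

lemma norm_comp_homeo (φh : Ω ≃ₜ K) (q : C(K, ℝ)) :
    ‖q.comp (φh : C(Ω, K))‖ = ‖q‖ := by
  apply le_antisymm
  · rw [norm_le_iff _ (norm_nonneg q)]
    intro s
    exact abs_le_norm q (φh s)
  · rw [norm_le_iff _ (norm_nonneg _)]
    intro x
    calc |q x| = |(q.comp (φh : C(Ω, K))) (φh.symm x)| := by
          simp [ContinuousMap.comp_apply]
    _ ≤ _ := abs_le_norm _ _

variable (T : C(K, ℝ) → C(Ω, ℝ))
    (hmap : ∀ f : C(K, ℝ), ‖f‖ = 1 → ‖T f‖ = 1)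
    (hsurj : ∀ g : C(Ω, ℝ), ‖g‖ = 1 → ∃ f : C(K, ℝ), ‖f‖ = 1 ∧ T f = g)
    (hphase : ∀ f g : C(K, ℝ), ‖f‖ = 1 → ‖g‖ = 1 →
      ({‖T f + T g‖, ‖T f - T g‖} : Set ℝ) = {‖f + g‖, ‖f - g‖})

include T hmap hsurj hphase

/-- full sign coherence -/
lemma main_sign [Nonempty K] [Nonempty Ω] (φh : Ω ≃ₜ K)
    (hΦ : ∀ (s : Ω) (f : C(K, ℝ)), ‖f‖ = 1 → (|f (φh s)| = 1 ↔ |T f s| = 1))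
    {f : C(K, ℝ)} (hf : ‖f‖ = 1) :
    (∀ s, T f s = T (ContinuousMap.const K 1) s * f (φh s)) ∨
      (∀ s, T f s = -(T (ContinuousMap.const K 1) s * f (φh s))) := by
  set h := T (ContinuousMap.const K 1) with hh
  have hstar := star_eq T hmap hsurj hphase (⇑φh) hΦ
  have habs : ∀ s, |h s| = 1 := by
    intro s; rw [hh, hstar _ norm_const_one s]; simp
  have hsq : ∀ s, h s * h s = 1 := by
    intro s
    have := habs s
    nlinarith [sq_abs (h s)]
  by_cases hall : ∀ s, T f s = h s * f (φh s)
  · exact Or.inl hall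
  push_neg at hall
  obtain ⟨s₂, hs₂⟩ := hall
  have hE2 : T f s₂ = -(h s₂ * f (φh s₂)) := by
    rcases ptwise_sign T hmap hsurj hphase (⇑φh) hΦ hf s₂ with h' | h'
    · exact absurd h' hs₂
    · exact h'
  have hb0 : f (φh s₂) ≠ 0 := fun h0 => hs₂ (by rw [hE2, h0]; ring)
  right
  intro s₁
  by_contra hs₁
  have hE1 : T f s₁ = h s₁ * f (φh s₁) := by
    rcases ptwise_sign T hmap hsurj hphase (⇑φh) hΦ hf s₁ with h' | h'
    · exact h'
    · exact absurd h' hs₁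
  have ha0 : f (φh s₁) ≠ 0 := fun h0 => hs₁ (by rw [hE1, h0]; ring)
  set a := f (φh s₁) with hadef
  set b := f (φh s₂) with hbdef
  have haabs : |a| ≤ 1 := by
    have := abs_le_norm f (φh s₁); rw [hf] at this; exact this
  have hbabs : |b| ≤ 1 := by
    have := abs_le_norm f (φh s₂); rw [hf] at this; exact this
  set δ := min |a| |b| / 4 with hδdef
  have hδpos : 0 < δ := by
    have h1 : 0 < |a| := abs_pos.2 ha0
    have h2 : 0 < |b| := abs_pos.2 hb0
    have : 0 < min |a| |b| := lt_min h1 h2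
    simp only [hδdef]; linarith
  have h4δa : 4 * δ ≤ |a| := by
    simp only [hδdef]; have := min_le_left |a| |b|; linarith
  have h4δb : 4 * δ ≤ |b| := by
    simp only [hδdef]; have := min_le_right |a| |b|; linarith
  -- G' = h * T f
  set G' : C(Ω, ℝ) := h * T f with hG'def
  have hG'1 : G' s₁ = a := by
    simp only [hG'def, ContinuousMap.mul_apply]
    rw [hE1, ← mul_assoc, hsq s₁, one_mul]
  have hG'2 : G' s₂ = -b := by
    simp only [hG'def, ContinuousMap.mul_apply]
    rw [hE2]
    have : h s₂ * -(h s₂ * b) = -((h s₂ * h s₂) * b) := by ring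
    rw [this, hsq s₂, one_mul]
  have hG'abs : ∀ s, |G' s| = |f (φh s)| := by
    intro s
    simp only [hG'def, ContinuousMap.mul_apply]
    rw [abs_mul, habs s, one_mul]
    exact hstar f hf s
  -- separation
  have hs12 : s₁ ≠ s₂ := by
    intro he
    have h1 : T f s₁ = -(h s₁ * b) := by rw [he]; exact hE2
    have hab : a = b := by rw [hadef, hbdef, he]
    rw [hE1, ← hab] at h1
    have h2 : h s₁ * a = 0 := by linarith
    have h3 : |h s₁ * a| = |a| := by rw [abs_mul, habs s₁, one_mul]
    rw [h2, abs_zero] at h3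
    exact ha0 (abs_eq_zero.1 h3.symm)
  obtain ⟨O₁, O₂, hO₁, hO₂, hsO₁, hsO₂, hO12⟩ := t2_separation hs12
  have hFcont : Continuous fun s : Ω => f (φh s) := f.continuous.comp φh.continuous
  set W₁ : Set Ω := O₁ ∩ {t | |f (φh t) - a| < δ} ∩ {t | |G' t - a| < δ} with hW₁def
  set W₂ : Set Ω := O₂ ∩ {t | |f (φh t) - b| < δ} ∩ {t | |G' t + b| < δ} with hW₂def
  have hW₁open : IsOpen W₁ := by
    apply IsOpen.inter
    apply IsOpen.inter hO₁
    · exact isOpen_lt ((hFcont.sub continuous_const).abs) continuous_const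
    · exact isOpen_lt ((G'.continuous.sub continuous_const).abs) continuous_const
  have hW₂open : IsOpen W₂ := by
    apply IsOpen.inter
    apply IsOpen.inter hO₂
    · exact isOpen_lt ((hFcont.sub continuous_const).abs) continuous_const
    · exact isOpen_lt ((G'.continuous.add continuous_const).abs) continuous_const
  have hs₁W : s₁ ∈ W₁ := by
    refine ⟨⟨hsO₁, ?_⟩, ?_⟩ <;> simp [hG'1, hδpos, ← hadef]
  have hs₂W : s₂ ∈ W₂ := by
    refine ⟨⟨hsO₂, ?_⟩, ?_⟩ <;> simp [hG'2, hδpos, ← hbdef]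
  have hW12 : Disjoint W₁ W₂ := by
    apply Disjoint.mono _ _ hO12
    · exact fun t ht => ht.1.1
    · exact fun t ht => ht.1.1
  set V₁ : Set K := ⇑φh '' W₁ with hV₁def
  set V₂ : Set K := ⇑φh '' W₂ with hV₂def
  have hV₁open : IsOpen V₁ := φh.isOpenMap W₁ hW₁open
  have hV₂open : IsOpen V₂ := φh.isOpenMap W₂ hW₂open
  have hV12 : Disjoint V₁ V₂ :=
    hW12.image (φh.injective.injOn) (subset_univ _) (subset_univ _)
  have hx₁ : φh s₁ ∈ V₁ := mem_image_of_mem _ hs₁W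
  have hx₂ : φh s₂ ∈ V₂ := mem_image_of_mem _ hs₂W
  obtain ⟨u₁, hu₁x, hu₁0, hu₁Icc, hu₁norm⟩ := urysohn hV₁open.isClosed_compl
    (by simpa using hx₁ : φh s₁ ∉ V₁ᶜ)
  obtain ⟨u₂, hu₂x, hu₂0, hu₂Icc, hu₂norm⟩ := urysohn hV₂open.isClosed_compl
    (by simpa using hx₂ : φh s₂ ∉ V₂ᶜ)
  set g : C(K, ℝ) := u₁ + u₂ with hgdef
  have hgnn : ∀ y, 0 ≤ g y := by
    intro y
    simp only [hgdef, ContinuousMap.add_apply]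
    linarith [(hu₁Icc y).1, (hu₂Icc y).1]
  have hgval : ∀ y, y ∉ V₁ → y ∉ V₂ → g y = 0 := by
    intro y h1 h2
    simp only [hgdef, ContinuousMap.add_apply]
    rw [hu₁0 y (by simpa using h1), hu₂0 y (by simpa using h2)]
    norm_num
  have hgle1 : ∀ y, g y ≤ 1 := by
    intro y
    simp only [hgdef, ContinuousMap.add_apply]
    by_cases hy : y ∈ V₁
    · have : y ∉ V₂ := fun hy2 => (hV12.ne_of_mem hy hy2) rfl
      rw [hu₂0 y (by simpa using this)]
      linarith [(hu₁Icc y).2]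
    · rw [hu₁0 y (by simpa using hy)]
      linarith [(hu₂Icc y).2]
  have hgx₁ : g (φh s₁) = 1 := by
    simp only [hgdef, ContinuousMap.add_apply]
    have hn2 : φh s₁ ∉ V₂ := fun hy2 => (hV12.ne_of_mem hx₁ hy2) rfl
    rw [hu₁x, hu₂0 _ (by simpa using hn2)]
    norm_num
  have hgx₂ : g (φh s₂) = 1 := by
    simp only [hgdef, ContinuousMap.add_apply]
    have hn1 : φh s₂ ∉ V₁ := fun hy1 => (hV12.ne_of_mem hy1 hx₂) rfl
    rw [hu₂x, hu₁0 _ (by simpa using hn1)]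
    norm_num
  have hgnorm : ‖g‖ = 1 := by
    apply le_antisymm
    · rw [norm_le_iff _ zero_le_one]
      intro y
      rw [abs_of_nonneg (hgnn y)]
      exact hgle1 y
    · calc (1:ℝ) = |g (φh s₁)| := by rw [hgx₁]; norm_num
      _ ≤ _ := abs_le_norm _ _
  -- transported maps
  set Pm : C(Ω, ℝ) := g.comp (φh : C(Ω, K)) with hPmdef
  set Fm : C(Ω, ℝ) := f.comp (φh : C(Ω, K)) with hFmdef
  have hPmapp : ∀ s, Pm s = g (φh s) := fun s => rfl
  have hFmapp : ∀ s, Fm s = f (φh s) := fun s => rfl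
  have hPIcc : ∀ s, 0 ≤ Pm s ∧ Pm s ≤ 1 := fun s => ⟨hgnn _, hgle1 _⟩
  have hPout : ∀ s, s ∉ W₁ → s ∉ W₂ → Pm s = 0 := by
    intro s h1 h2
    rw [hPmapp]
    apply hgval
    · rintro ⟨w, hw, hweq⟩
      exact h1 (φh.injective hweq ▸ hw)
    · rintro ⟨w, hw, hweq⟩
      exact h2 (φh.injective hweq ▸ hw)
  have hmin := key_min T hmap hsurj hphase hf hgnorm
  have hRplus : ‖f + g‖ = ‖Fm + Pm‖ := by
    rw [hFmdef, hPmdef, ← ContinuousMap.add_comp]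
    exact (norm_comp_homeo φh (f + g)).symm
  have hRminus : ‖f - g‖ = ‖Fm - Pm‖ := by
    rw [hFmdef, hPmdef, ← ContinuousMap.sub_comp]
    exact (norm_comp_homeo φh (f - g)).symm
  have hkey : min ‖G' + Pm‖ ‖G' - Pm‖ = min ‖Fm + Pm‖ ‖Fm - Pm‖ := by
    rcases nonneg_sign T hmap hsurj hphase (⇑φh) hΦ hgnorm hgnn with hTg | hTg
    · have e1 : ‖T f + T g‖ = ‖G' + Pm‖ := by
        apply norm_eq_of_abs_eq
        intro s
        have e : (T f + T g) s = h s * ((G' + Pm) s) := by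
          simp only [ContinuousMap.add_apply, hG'def, ContinuousMap.mul_apply]
          rw [hTg s, hPmapp s, mul_add, ← mul_assoc, hsq s, one_mul]
        rw [e, abs_mul, habs s, one_mul]
      have e2 : ‖T f - T g‖ = ‖G' - Pm‖ := by
        apply norm_eq_of_abs_eq
        intro s
        have e : (T f - T g) s = h s * ((G' - Pm) s) := by
          simp only [ContinuousMap.sub_apply, hG'def, ContinuousMap.mul_apply]
          rw [hTg s, hPmapp s, mul_sub, ← mul_assoc, hsq s, one_mul]
        rw [e, abs_mul, habs s, one_mul]
      rw [← e1, ← e2, hmin, hRplus, hRminus]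
    · have e1 : ‖T f + T g‖ = ‖G' - Pm‖ := by
        apply norm_eq_of_abs_eq
        intro s
        have e : (T f + T g) s = h s * ((G' - Pm) s) := by
          simp only [ContinuousMap.add_apply, ContinuousMap.sub_apply, hG'def,
            ContinuousMap.mul_apply]
          rw [hTg s, hPmapp s, mul_sub, ← mul_assoc, hsq s, one_mul]
          ring
        rw [e, abs_mul, habs s, one_mul]
      have e2 : ‖T f - T g‖ = ‖G' + Pm‖ := by
        apply norm_eq_of_abs_eq
        intro s
        have e : (T f - T g) s = h s * ((G' + Pm) s) := by
          simp only [ContinuousMap.sub_apply, ContinuousMap.add_apply, hG'def,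
            ContinuousMap.mul_apply]
          rw [hTg s, hPmapp s, mul_add, ← mul_assoc, hsq s, one_mul]
          ring
        rw [e, abs_mul, habs s, one_mul]
      rw [← e1, ← e2, min_comm ‖T f - T g‖ ‖T f + T g‖, hmin, hRplus, hRminus]
  -- local control hypotheses
  have hF1 : ∀ s ∈ W₁, |Fm s - a| < δ := fun s hs => hs.1.2
  have hF2 : ∀ s ∈ W₂, |Fm s - b| < δ := fun s hs => hs.1.2
  have hG1 : ∀ s ∈ W₁, |G' s - a| < δ := fun s hs => hs.2
  have hG2 : ∀ s ∈ W₂, |G' s - (-b)| < δ := by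
    intro s hs
    rw [sub_neg_eq_add]
    exact hs.2
  have hFb : ∀ s, |Fm s| ≤ 1 := by
    intro s
    rw [hFmapp s]
    have := abs_le_norm f (φh s); rwa [hf] at this
  have hGb : ∀ s, |G' s| ≤ 1 := by
    intro s
    rw [hG'abs s]
    have := abs_le_norm f (φh s); rwa [hf] at this
  have hbabs' : |(-b)| ≤ 1 := by rwa [abs_neg]
  -- upper bounds
  have hN1ub : ‖Fm + Pm‖ ≤ max 1 (max |a + 1| |b + 1|) + δ := by
    have := ub_helper (le_of_lt hδpos) (Or.inl rfl) haabs hbabs hF1 hF2 hFb hPIcc hPout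
    rwa [one_smul] at this
  have hN2ub : ‖Fm - Pm‖ ≤ max 1 (max |a - 1| |b - 1|) + δ := by
    have := ub_helper (le_of_lt hδpos) (Or.inr rfl) haabs hbabs hF1 hF2 hFb hPIcc hPout
    rwa [neg_one_smul, ← sub_eq_add_neg, show (a + -1 : ℝ) = a - 1 by ring,
      show (b + -1 : ℝ) = b - 1 by ring] at this
  have hM1ub : ‖G' + Pm‖ ≤ max 1 (max |a + 1| |b - 1|) + δ := by
    have := ub_helper (le_of_lt hδpos) (Or.inl rfl) haabs hbabs' hG1 hG2 hGb hPIcc hPout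
    rwa [one_smul, show ((-b) + 1 : ℝ) = -(b - 1) by ring, abs_neg] at this
  have hM2ub : ‖G' - Pm‖ ≤ max 1 (max |a - 1| |b + 1|) + δ := by
    have := ub_helper (le_of_lt hδpos) (Or.inr rfl) haabs hbabs' hG1 hG2 hGb hPIcc hPout
    rwa [neg_one_smul, ← sub_eq_add_neg, show (a + -1 : ℝ) = a - 1 by ring,
      show ((-b) + -1 : ℝ) = -(b + 1) by ring, abs_neg] at this
  -- lower bounds
  have hlbN1a : |a + 1| ≤ ‖Fm + Pm‖ := by
    have e : (Fm + Pm) s₁ = a + 1 := by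
      simp only [ContinuousMap.add_apply]
      rw [hFmapp s₁, hPmapp s₁, ← hadef, hgx₁]
    calc |a + 1| = |(Fm + Pm) s₁| := by rw [e]
    _ ≤ _ := abs_le_norm _ _
  have hlbN1b : |b + 1| ≤ ‖Fm + Pm‖ := by
    have e : (Fm + Pm) s₂ = b + 1 := by
      simp only [ContinuousMap.add_apply]
      rw [hFmapp s₂, hPmapp s₂, ← hbdef, hgx₂]
    calc |b + 1| = |(Fm + Pm) s₂| := by rw [e]
    _ ≤ _ := abs_le_norm _ _
  have hlbN2a : |a - 1| ≤ ‖Fm - Pm‖ := by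
    have e : (Fm - Pm) s₁ = a - 1 := by
      simp only [ContinuousMap.sub_apply]
      rw [hFmapp s₁, hPmapp s₁, ← hadef, hgx₁]
    calc |a - 1| = |(Fm - Pm) s₁| := by rw [e]
    _ ≤ _ := abs_le_norm _ _
  have hlbN2b : |b - 1| ≤ ‖Fm - Pm‖ := by
    have e : (Fm - Pm) s₂ = b - 1 := by
      simp only [ContinuousMap.sub_apply]
      rw [hFmapp s₂, hPmapp s₂, ← hbdef, hgx₂]
    calc |b - 1| = |(Fm - Pm) s₂| := by rw [e]
    _ ≤ _ := abs_le_norm _ _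
  have hlbM1a : |a + 1| ≤ ‖G' + Pm‖ := by
    have e : (G' + Pm) s₁ = a + 1 := by
      simp only [ContinuousMap.add_apply]
      rw [hG'1, hPmapp s₁, hgx₁]
    calc |a + 1| = |(G' + Pm) s₁| := by rw [e]
    _ ≤ _ := abs_le_norm _ _
  have hlbM1b : |b - 1| ≤ ‖G' + Pm‖ := by
    have e : (G' + Pm) s₂ = -(b - 1) := by
      simp only [ContinuousMap.add_apply]
      rw [hG'2, hPmapp s₂, hgx₂]
      ring
    calc |b - 1| = |(G' + Pm) s₂| := by rw [e, abs_neg]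
    _ ≤ _ := abs_le_norm _ _
  have hlbM2a : |a - 1| ≤ ‖G' - Pm‖ := by
    have e : (G' - Pm) s₁ = a - 1 := by
      simp only [ContinuousMap.sub_apply]
      rw [hG'1, hPmapp s₁, hgx₁]
    calc |a - 1| = |(G' - Pm) s₁| := by rw [e]
    _ ≤ _ := abs_le_norm _ _
  have hlbM2b : |b + 1| ≤ ‖G' - Pm‖ := by
    have e : (G' - Pm) s₂ = -(b + 1) := by
      simp only [ContinuousMap.sub_apply]
      rw [hG'2, hPmapp s₂, hgx₂]
      ring
    calc |b + 1| = |(G' - Pm) s₂| := by rw [e, abs_neg]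
    _ ≤ _ := abs_le_norm _ _
  -- numeric case analysis
  obtain ⟨ha1, ha2⟩ := abs_le.1 haabs
  obtain ⟨hb1, hb2⟩ := abs_le.1 hbabs
  have hminM_le : min ‖G' + Pm‖ ‖G' - Pm‖ ≤ min ‖Fm + Pm‖ ‖Fm - Pm‖ := le_of_eq hkey
  have hminN_le : min ‖Fm + Pm‖ ‖Fm - Pm‖ ≤ min ‖G' + Pm‖ ‖G' - Pm‖ := le_of_eq hkey.symm
  rcases ha0.lt_or_gt with han | hap <;> rcases hb0.lt_or_gt with hbn | hbp
  · -- a < 0, b < 0 : F-side small, G'-side big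
    have c1 : |a + 1| ≤ 1 := by rw [abs_le]; constructor <;> linarith
    have c2 : |b + 1| ≤ 1 := by rw [abs_le]; constructor <;> linarith
    have hsmall : ‖Fm + Pm‖ ≤ 1 + δ := by
      have : max 1 (max |a + 1| |b + 1|) = 1 := max_eq_left (max_le c1 c2)
      rw [this] at hN1ub; exact hN1ub
    have eb : |b - 1| = 1 - b := by rw [abs_sub_comm]; exact abs_of_pos (by linarith)
    have ea : |a - 1| = 1 - a := by rw [abs_sub_comm]; exact abs_of_pos (by linarith)
    have habsa : |a| = -a := abs_of_neg han
    have habsb : |b| = -b := abs_of_neg hbn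
    have hbig1 : 1 + 4 * δ ≤ ‖G' + Pm‖ := by rw [eb] at hlbM1b; linarith [h4δb]
    have hbig2 : 1 + 4 * δ ≤ ‖G' - Pm‖ := by rw [ea] at hlbM2a; linarith [h4δa]
    have h1 := le_trans (le_min hbig1 hbig2) (le_trans hminM_le (min_le_left _ _))
    linarith
  · -- a < 0, b > 0 : G'-side small (M1), F-side big
    have c1 : |a + 1| ≤ 1 := by rw [abs_le]; constructor <;> linarith
    have c2 : |b - 1| ≤ 1 := by rw [abs_le]; constructor <;> linarith
    have hsmall : ‖G' + Pm‖ ≤ 1 + δ := by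
      have : max 1 (max |a + 1| |b - 1|) = 1 := max_eq_left (max_le c1 c2)
      rw [this] at hM1ub; exact hM1ub
    have eb : |b + 1| = b + 1 := abs_of_pos (by linarith)
    have ea : |a - 1| = 1 - a := by rw [abs_sub_comm]; exact abs_of_pos (by linarith)
    have habsa : |a| = -a := abs_of_neg han
    have habsb : |b| = b := abs_of_pos hbp
    have hbig1 : 1 + 4 * δ ≤ ‖Fm + Pm‖ := by rw [eb] at hlbN1b; linarith [h4δb]
    have hbig2 : 1 + 4 * δ ≤ ‖Fm - Pm‖ := by rw [ea] at hlbN2a; linarith [h4δa]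
    have h1 := le_trans (le_min hbig1 hbig2) (le_trans hminN_le (min_le_left _ _))
    linarith
  · -- a > 0, b < 0 : G'-side small (M2), F-side big
    have c1 : |a - 1| ≤ 1 := by rw [abs_le]; constructor <;> linarith
    have c2 : |b + 1| ≤ 1 := by rw [abs_le]; constructor <;> linarith
    have hsmall : ‖G' - Pm‖ ≤ 1 + δ := by
      have : max 1 (max |a - 1| |b + 1|) = 1 := max_eq_left (max_le c1 c2)
      rw [this] at hM2ub; exact hM2ub
    have ea : |a + 1| = a + 1 := abs_of_pos (by linarith)
    have eb : |b - 1| = 1 - b := by rw [abs_sub_comm]; exact abs_of_pos (by linarith)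
    have habsa : |a| = a := abs_of_pos hap
    have habsb : |b| = -b := abs_of_neg hbn
    have hbig1 : 1 + 4 * δ ≤ ‖Fm + Pm‖ := by rw [ea] at hlbN1a; linarith [h4δa]
    have hbig2 : 1 + 4 * δ ≤ ‖Fm - Pm‖ := by rw [eb] at hlbN2b; linarith [h4δb]
    have h1 := le_trans (le_min hbig1 hbig2) (le_trans hminN_le (min_le_right _ _))
    linarith
  · -- a > 0, b > 0 : F-side small (N2), G'-side big
    have c1 : |a - 1| ≤ 1 := by rw [abs_le]; constructor <;> linarith
    have c2 : |b - 1| ≤ 1 := by rw [abs_le]; constructor <;> linarith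
    have hsmall : ‖Fm - Pm‖ ≤ 1 + δ := by
      have : max 1 (max |a - 1| |b - 1|) = 1 := max_eq_left (max_le c1 c2)
      rw [this] at hN2ub; exact hN2ub
    have ea : |a + 1| = a + 1 := abs_of_pos (by linarith)
    have eb : |b + 1| = b + 1 := abs_of_pos (by linarith)
    have habsa : |a| = a := abs_of_pos hap
    have habsb : |b| = b := abs_of_pos hbp
    have hbig1 : 1 + 4 * δ ≤ ‖G' + Pm‖ := by rw [ea] at hlbM1a; linarith [h4δa]
    have hbig2 : 1 + 4 * δ ≤ ‖G' - Pm‖ := by rw [eb] at hlbM2b; linarith [h4δb]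
    have h1 := le_trans (le_min hbig1 hbig2) (le_trans hminM_le (min_le_right _ _))
    linarith

end Stmt10Main

open Stmt10Aux Stmt10Main

theorem stmt10 {K Ω : Type*} [TopologicalSpace K] [CompactSpace K] [T2Space K]
    [TopologicalSpace Ω] [CompactSpace Ω] [T2Space Ω]
    (T : C(K, ℝ) → C(Ω, ℝ))
    (hmap : ∀ f : C(K, ℝ), ‖f‖ = 1 → ‖T f‖ = 1)
    (hsurj : ∀ g : C(Ω, ℝ), ‖g‖ = 1 → ∃ f : C(K, ℝ), ‖f‖ = 1 ∧ T f = g)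
    (hphase : ∀ f g : C(K, ℝ), ‖f‖ = 1 → ‖g‖ = 1 →
      ({‖T f + T g‖, ‖T f - T g‖} : Set ℝ) = {‖f + g‖, ‖f - g‖}) :
    ∃ (φ : Ω ≃ₜ K) (h : C(Ω, ℝ)), (∀ s : Ω, |h s| = 1) ∧
      ∀ f : C(K, ℝ), ‖f‖ = 1 → ∃ θ : ℝ, (θ = 1 ∨ θ = -1) ∧
        ∀ s : Ω, T f s = θ * h s * f (φ s) := by
  by_cases hKe : Nonempty K
  · have hΩe : Nonempty Ω := by
      by_contra hne
      rw [not_nonempty_iff] at hne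
      have h1 := hmap (ContinuousMap.const K 1) norm_const_one
      have h2 : ‖T (ContinuousMap.const K 1)‖ ≤ 0 :=
        (norm_le_iff _ le_rfl).2 (fun s => isEmptyElim s)
      rw [h1] at h2; linarith
    choose φ₀ hΦ0 using (fun s => phi_exists T hmap hsurj hphase s)
    have hΦ : ∀ (s : Ω) (f : C(K, ℝ)), ‖f‖ = 1 → (|f (φ₀ s)| = 1 ↔ |T f s| = 1) :=
      fun s f hf => hΦ0 s f hf
    have hinj : Function.Injective φ₀ := by
      intro s₁ s₂ he
      by_contra hne
      obtain ⟨g', hg's, hg'0, -, hg'norm⟩ := urysohn (isClosed_singleton (x := s₂))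
        (by simpa using hne)
      obtain ⟨k, hk, hTk⟩ := hsurj g' hg'norm
      have h1 : |k (φ₀ s₁)| = 1 := (hΦ s₁ k hk).2 (by rw [hTk, hg's]; norm_num)
      have h1' : |k (φ₀ s₂)| = 1 := he ▸ h1
      have h2 : |T k s₂| = 1 := (hΦ s₂ k hk).1 h1'
      rw [hTk, hg'0 s₂ (Set.mem_singleton _)] at h2
      norm_num at h2
    have hsurjφ : Function.Surjective φ₀ := by
      intro x
      obtain ⟨s, hs⟩ := psi_exists T hmap hsurj hphase x
      refine ⟨s, ?_⟩
      by_contra hne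
      obtain ⟨u, hux, hu0, -, hunorm⟩ := urysohn (isClosed_singleton (x := x))
        (by simpa using hne)
      have h1 : |T u s| = 1 := (hΦ s u hunorm).1 (by rw [hux]; norm_num)
      have h2 : |u x| = 1 := (hs u hunorm).2 h1
      rw [hu0 x (Set.mem_singleton _)] at h2
      norm_num at h2
    have hcont := phi_continuous T hmap hsurj hphase φ₀ hΦ
    have hce : Continuous ⇑(Equiv.ofBijective φ₀ ⟨hinj, hsurjφ⟩) := hcont
    refine ⟨hce.homeoOfEquivCompactToT2, T (ContinuousMap.const K 1), ?_, ?_⟩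
    · intro s
      have := star_eq T hmap hsurj hphase φ₀ hΦ (ContinuousMap.const K 1)
        norm_const_one s
      rw [this]; simp
    · intro f hf
      have hΦ' : ∀ (s : Ω) (f : C(K, ℝ)), ‖f‖ = 1 →
          (|f (hce.homeoOfEquivCompactToT2 s)| = 1 ↔ |T f s| = 1) := hΦ
      rcases main_sign T hmap hsurj hphase hce.homeoOfEquivCompactToT2 hΦ' hf with hc | hc
      · exact ⟨1, Or.inl rfl, fun s => by rw [hc s]; ring⟩
      · exact ⟨-1, Or.inr rfl, fun s => by rw [hc s]; ring⟩
  · rw [not_nonempty_iff] at hKe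
    have hΩe : IsEmpty Ω := by
      by_contra hne
      rw [not_isEmpty_iff] at hne
      obtain ⟨f, hf, -⟩ := hsurj (ContinuousMap.const Ω 1) norm_const_one
      have h2 : ‖f‖ ≤ 0 := (norm_le_iff _ le_rfl).2 (fun x => isEmptyElim x)
      rw [hf] at h2; linarith
    refine ⟨⟨Equiv.equivOfIsEmpty Ω K, ?_, ?_⟩, 0, fun s => isEmptyElim s, ?_⟩
    · rw [continuous_def]
      intro U _
      convert isOpen_empty
      exact Set.eq_empty_of_isEmpty _
    · rw [continuous_def]
      intro U _
      convert isOpen_empty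
      exact Set.eq_empty_of_isEmpty _
    · intro f hf
      exfalso
      have h2 : ‖f‖ ≤ 0 := (norm_le_iff _ le_rfl).2 (fun x => isEmptyElim x)
      rw [hf] at h2; linarith
end

section
/- Let Y be a real Banach space, K a compact Hausdorff space, and T : S_{C(K)} → S_Y a surjective phase-isometry with associated bijection Φ from K to maximal convex sets (satisfying T(F_t ∪ -F_t) = Φ(t) ∪ -Φ(t)). Then for every t ∈ K there exists a functional x* ∈ S_{Y*} such that x*(x) = 1 for all x ∈ Φ(t) and x*(T(f)) ∈ {f(t), -f(t)} for all f ∈ S_{C(K)}. -/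
open Metric Set

private lemma support_functional {Y : Type*} [NormedAddCommGroup Y] [NormedSpace ℝ Y]
    {S : Set Y} (hS : S ⊆ {y : Y | ‖y‖ = 1}) (hconv : Convex ℝ S) (hne : S.Nonempty) :
    ∃ xstar : Y →L[ℝ] ℝ, ‖xstar‖ = 1 ∧ ∀ y ∈ S, xstar y = 1 := by
  obtain ⟨y0, hy0⟩ := hne
  obtain ⟨f, u, hball, hsep⟩ :=
    geometric_hahn_banach_open (convex_ball (0:Y) 1) isOpen_ball hconv
      (by
        rw [Set.disjoint_left]
        intro x hx hxS
        have hx1 : ‖x‖ = 1 := hS hxS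
        rw [mem_ball, dist_zero_right, hx1] at hx
        exact lt_irrefl _ hx)
  have hu0 : 0 < u := by simpa using hball 0 (by simp)
  have hb : ∀ z : Y, ‖z‖ < 1 → |f z| ≤ u := by
    intro z hz
    have h1 : f z < u := hball z (by simpa [mem_ball, dist_zero_right] using hz)
    have h2 : f (-z) < u := hball (-z) (by simpa [mem_ball, dist_zero_right] using hz)
    rw [map_neg] at h2
    rw [abs_le]; constructor <;> linarith
  have key : ∀ x : Y, |f x| ≤ u * ‖x‖ := by
    intro x
    rcases eq_or_ne x 0 with rfl | hx
    · simp
    have hxn : 0 < ‖x‖ := norm_pos_iff.mpr hx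
    by_contra h
    push_neg at h
    have hfx : 0 < |f x| := lt_of_le_of_lt (by positivity) h
    set r : ℝ := u * ‖x‖ / |f x| with hr
    have hr1 : r < 1 := by
      rw [hr, div_lt_one hfx]; linarith
    have hr0 : 0 ≤ r := by positivity
    set r' : ℝ := (r + 1) / 2 with hr'
    have hr'r : r < r' := by rw [hr']; linarith
    have hr'1 : r' < 1 := by rw [hr']; linarith
    have hr'0 : 0 < r' := by linarith
    set z : Y := (r' / ‖x‖) • x with hz
    have hzn : ‖z‖ = r' := by
      rw [hz, norm_smul, Real.norm_eq_abs, abs_of_pos (by positivity)]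
      field_simp
    have hzb : |f z| ≤ u := hb z (by rw [hzn]; exact hr'1)
    have hfz : |f z| = r' / ‖x‖ * |f x| := by
      rw [hz, map_smul, smul_eq_mul, abs_mul, abs_of_pos (by positivity)]
    have : u < |f z| := by
      rw [hfz]
      have : u = r / ‖x‖ * |f x| := by
        rw [hr]; field_simp
      rw [this]
      apply mul_lt_mul_of_pos_right _ hfx
      gcongr
    linarith
  have hfu : ‖f‖ ≤ u := f.opNorm_le_bound hu0.le (fun x => by
    rw [Real.norm_eq_abs]; exact key x)
  have hval : ∀ y ∈ S, f y = u := by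
    intro y hy
    have h1 : u ≤ f y := hsep y hy
    have h2 : f y ≤ u := by
      have := f.le_opNorm y
      rw [hS hy, mul_one, Real.norm_eq_abs] at this
      calc f y ≤ |f y| := le_abs_self _
        _ ≤ ‖f‖ := this
        _ ≤ u := hfu
    linarith
  have hfnorm : ‖f‖ = u := by
    refine le_antisymm hfu ?_
    have := f.le_opNorm y0
    rw [hS hy0, mul_one, Real.norm_eq_abs, hval y0 hy0, abs_of_pos hu0] at this
    exact this
  refine ⟨u⁻¹ • f, ?_, ?_⟩
  · rw [norm_smul u⁻¹ f, Real.norm_eq_abs, abs_of_pos (inv_pos.mpr hu0), hfnorm]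
    field_simp
  · intro y hy
    simp only [ContinuousLinearMap.smul_apply, smul_eq_mul, hval y hy]
    field_simp


theorem stmt13 {K : Type*} [TopologicalSpace K] [CompactSpace K] [T2Space K]
    {Y : Type*} [NormedAddCommGroup Y] [NormedSpace ℝ Y] [CompleteSpace Y]
    (T : C(K, ℝ) → Y)
    (hmap : ∀ f : C(K, ℝ), ‖f‖ = 1 → ‖T f‖ = 1)
    (hsurj : ∀ y : Y, ‖y‖ = 1 → ∃ f : C(K, ℝ), ‖f‖ = 1 ∧ T f = y)
    (hphase : ∀ f g : C(K, ℝ), ‖f‖ = 1 → ‖g‖ = 1 →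
      ({‖T f + T g‖, ‖T f - T g‖} : Set ℝ) = {‖f + g‖, ‖f - g‖})
    (Φ : K → Set Y)
    (hΦmax : ∀ t : K, Φ t ⊆ {y : Y | ‖y‖ = 1} ∧ Convex ℝ (Φ t) ∧
      ∀ C : Set Y, Convex ℝ C → C ⊆ {y : Y | ‖y‖ = 1} → Φ t ⊆ C → C = Φ t)
    (hΦ : ∀ t : K,
      T '' ({f : C(K, ℝ) | ‖f‖ = 1 ∧ f t = 1} ∪ -{f : C(K, ℝ) | ‖f‖ = 1 ∧ f t = 1}) =
        Φ t ∪ -Φ t) :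
    ∀ t : K, ∃ xstar : Y →L[ℝ] ℝ, ‖xstar‖ = 1 ∧
      (∀ x ∈ Φ t, xstar x = 1) ∧
      (∀ f : C(K, ℝ), ‖f‖ = 1 → xstar (T f) = f t ∨ xstar (T f) = -f t) := by
  intro t
  haveI : Nonempty K := ⟨t⟩
  obtain ⟨hsub, hconv, -⟩ := hΦmax t
  -- the constant one function
  have hone : ‖(1 : C(K, ℝ))‖ = 1 := by
    refine le_antisymm (((1 : C(K, ℝ)).norm_le zero_le_one).mpr (fun s => by simp)) ?_
    have := (1 : C(K, ℝ)).norm_coe_le_norm t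
    simpa using this
  have hT1 : T 1 ∈ Φ t ∪ -Φ t := by
    rw [← hΦ t]
    exact ⟨1, Or.inl ⟨hone, by simp⟩, rfl⟩
  have hΦne : (Φ t).Nonempty := by
    rcases hT1 with h | h
    · exact ⟨_, h⟩
    · exact ⟨-T 1, by rwa [Set.mem_neg] at h⟩
  obtain ⟨xstar, hx1, hxΦ⟩ := support_functional hsub hconv hΦne
  refine ⟨xstar, hx1, hxΦ, ?_⟩
  -- xstar takes values ±1 on T of the face
  have hsign : ∀ g : C(K, ℝ), ‖g‖ = 1 → g t = 1 → xstar (T g) = 1 ∨ xstar (T g) = -1 := by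
    intro g hg hgt
    have hm : T g ∈ Φ t ∪ -Φ t := by
      rw [← hΦ t]; exact ⟨g, Or.inl ⟨hg, hgt⟩, rfl⟩
    rcases hm with h | h
    · exact Or.inl (hxΦ _ h)
    · right
      have := hxΦ (-T g) (by rwa [Set.mem_neg] at h)
      rw [map_neg] at this
      linarith
  -- bound |xstar z| ≤ ‖z‖
  have hbnd : ∀ z : Y, |xstar z| ≤ ‖z‖ := by
    intro z
    have := xstar.le_opNorm z
    rwa [hx1, one_mul, Real.norm_eq_abs] at this
  -- key: for f with f t ≥ 0, |xstar (T f)| = f t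
  have habs : ∀ f : C(K, ℝ), ‖f‖ = 1 → 0 ≤ f t → |xstar (T f)| = f t := by
    intro f hf hft
    set a := f t with ha
    have hfs : ∀ s, |f s| ≤ 1 := by
      intro s
      have := f.norm_coe_le_norm s
      rwa [hf, Real.norm_eq_abs] at this
    have ha1 : a ≤ 1 := le_trans (le_abs_self _) (hfs t)
    set c := xstar (T f) with hc
    -- upper bound via g1
    have hupper : |c| ≤ a := by
      set g1 : C(K, ℝ) := 0 ⊔ (1 ⊓ (ContinuousMap.const K (1 + a) - |f|)) with hg1def
      have hg1app : ∀ s, g1 s = max 0 (min 1 (1 + a - |f s|)) := by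
        intro s
        simp [hg1def]
      have hg1t : g1 t = 1 := by
        rw [hg1app t, abs_of_nonneg hft]
        have h' : (1:ℝ) + a - a = 1 := by ring
        rw [h']
        norm_num
      have hg1le : ∀ s, |f s| + g1 s ≤ 1 + a := by
        intro s
        rw [hg1app s]
        have h1 : min 1 (1 + a - |f s|) ≤ 1 + a - |f s| := min_le_right _ _
        have h2 : (0:ℝ) ≤ 1 + a - |f s| := by have := hfs s; linarith
        have : max 0 (min 1 (1 + a - |f s|)) ≤ 1 + a - |f s| := max_le h2 h1
        linarith
      have hg1nn : ∀ s, 0 ≤ g1 s := fun s => by rw [hg1app s]; exact le_max_left _ _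
      have hg1n : ‖g1‖ = 1 := by
        refine le_antisymm ((g1.norm_le zero_le_one).mpr (fun s => ?_)) ?_
        · rw [Real.norm_eq_abs, abs_of_nonneg (hg1nn s), hg1app s]
          exact max_le zero_le_one (min_le_left _ _)
        · have := g1.norm_coe_le_norm t
          rwa [hg1t, norm_one] at this
      have hfp : ‖f + g1‖ ≤ 1 + a := by
        refine (ContinuousMap.norm_le _ (by linarith)).mpr (fun s => ?_)
        rw [ContinuousMap.add_apply, Real.norm_eq_abs]
        have := hg1le s
        have := hg1nn s
        have h3 := abs_add_le (f s) (g1 s)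
        rw [abs_of_nonneg (hg1nn s)] at h3
        linarith
      have hfm : ‖f - g1‖ ≤ 1 + a := by
        refine (ContinuousMap.norm_le _ (by linarith)).mpr (fun s => ?_)
        rw [ContinuousMap.sub_apply, Real.norm_eq_abs]
        have h3 := abs_sub (f s) (g1 s)
        rw [abs_of_nonneg (hg1nn s)] at h3
        have := hg1le s
        linarith
      -- transfer to T via phase condition
      have hTp : ‖T f + T g1‖ ≤ 1 + a := by
        have hm : ‖T f + T g1‖ ∈ ({‖f + g1‖, ‖f - g1‖} : Set ℝ) := by
          rw [← hphase f g1 hf hg1n]; left; rfl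
        rcases hm with h | h
        · rw [h]; exact hfp
        · rw [Set.mem_singleton_iff] at h; rw [h]; exact hfm
      have hTm : ‖T f - T g1‖ ≤ 1 + a := by
        have hm : ‖T f - T g1‖ ∈ ({‖f + g1‖, ‖f - g1‖} : Set ℝ) := by
          rw [← hphase f g1 hf hg1n]; right; rfl
        rcases hm with h | h
        · rw [h]; exact hfp
        · rw [Set.mem_singleton_iff] at h; rw [h]; exact hfm
      have hcp : |c + xstar (T g1)| ≤ 1 + a := by
        have := hbnd (T f + T g1)
        rw [map_add] at this
        exact le_trans this hTp
      have hcm : |c - xstar (T g1)| ≤ 1 + a := by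
        have := hbnd (T f - T g1)
        rw [map_sub] at this
        exact le_trans this hTm
      rcases hsign g1 hg1n hg1t with hε | hε <;>
        rw [hε] at hcp hcm <;>
        rw [abs_le] at hcp hcm ⊢ <;>
        constructor <;> linarith [hcp.1, hcp.2, hcm.1, hcm.2]
    -- lower bound via g2
    have hlower : a ≤ |c| := by
      set g2 : C(K, ℝ) := 1 ⊓ (f + ContinuousMap.const K (1 - a)) with hg2def
      have hg2app : ∀ s, g2 s = min 1 (f s + (1 - a)) := by
        intro s
        simp [hg2def]
      have hg2t : g2 t = 1 := by
        rw [hg2app t]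
        have h' : f t + (1 - a) = 1 := by rw [← ha]; ring
        rw [h']
        norm_num
      have hg2n : ‖g2‖ = 1 := by
        refine le_antisymm ((g2.norm_le zero_le_one).mpr (fun s => ?_)) ?_
        · rw [Real.norm_eq_abs, hg2app s, abs_le]
          have := hfs s
          rw [abs_le] at this
          constructor
          · apply le_min (by norm_num); linarith
          · exact le_trans (min_le_left _ _) le_rfl
        · have := g2.norm_coe_le_norm t
          rwa [hg2t, norm_one] at this
      have hfm2 : ‖f - g2‖ ≤ 1 - a := by
        refine (ContinuousMap.norm_le _ (by linarith)).mpr (fun s => ?_)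
        rw [ContinuousMap.sub_apply, Real.norm_eq_abs, hg2app s]
        rcases le_total 1 (f s + (1 - a)) with h | h
        · rw [min_eq_left h, abs_le]
          have := hfs s
          rw [abs_le] at this
          constructor <;> linarith
        · rw [min_eq_right h]
          rw [abs_le]
          constructor <;> linarith
      have hm : ‖f - g2‖ ∈ ({‖T f + T g2‖, ‖T f - T g2‖} : Set ℝ) := by
        rw [hphase f g2 hf hg2n]; right; rfl
      have hδ : |xstar (T g2)| = 1 := by
        rcases hsign g2 hg2n hg2t with h | h <;> rw [h] <;> norm_num
      rcases hm with h | h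
      · have h1 : |c + xstar (T g2)| ≤ 1 - a := by
          have := hbnd (T f + T g2)
          rw [map_add] at this
          rw [← h] at this
          exact le_trans this hfm2
        have h2 : |xstar (T g2)| ≤ |c + xstar (T g2)| + |c| := by
          calc |xstar (T g2)| = |(c + xstar (T g2)) - c| := by rw [add_sub_cancel_left]
            _ ≤ |c + xstar (T g2)| + |c| := abs_sub _ _
        rw [hδ] at h2
        linarith
      · rw [Set.mem_singleton_iff] at h
        have h1 : |c - xstar (T g2)| ≤ 1 - a := by
          have := hbnd (T f - T g2)
          rw [map_sub] at this
          rw [← h] at this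
          exact le_trans this hfm2
        have h2 : |xstar (T g2)| ≤ |c - xstar (T g2)| + |c| := by
          calc |xstar (T g2)| = |c - (c - xstar (T g2))| := by rw [sub_sub_cancel]
            _ ≤ |c| + |c - xstar (T g2)| := abs_sub _ _
            _ = |c - xstar (T g2)| + |c| := by ring
        rw [hδ] at h2
        linarith
    linarith [le_antisymm hupper hlower]
  -- conclude
  intro f hf
  rcases le_or_gt 0 (f t) with hft | hft
  · exact (abs_eq hft).mp (habs f hf hft)
  · have hnf : ‖(-f : C(K, ℝ))‖ = 1 := by rwa [norm_neg]
    have hnft : (0:ℝ) ≤ (-f) t := by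
      rw [ContinuousMap.neg_apply]; linarith
    have h2 := habs (-f) hnf hnft
    rw [ContinuousMap.neg_apply] at h2
    -- T (-f) = ± T f
    have h0 : (0:ℝ) ∈ ({‖T f + T (-f)‖, ‖T f - T (-f)‖} : Set ℝ) := by
      rw [hphase f (-f) hf hnf]
      left
      simp
    have hTf : |xstar (T f)| = -f t := by
      rcases h0 with h | h
      · have hTneg : T (-f) = -T f := by
          have h' : T f + T (-f) = 0 := norm_eq_zero.mp h.symm
          exact eq_neg_of_add_eq_zero_right h'
        rw [hTneg, map_neg, abs_neg] at h2
        exact h2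
      · rw [Set.mem_singleton_iff] at h
        have : T (-f) = T f := by
          have := norm_eq_zero.mp h.symm
          exact (sub_eq_zero.mp this).symm
        rw [← this]
        exact h2
    rcases (abs_eq (by linarith : (0:ℝ) ≤ -f t)).mp hTf with h | h
    · right; exact h
    · left; rw [h]; ring
end

section
/- Let K be a compact Hausdorff space, f ∈ S_{C(K)}, t ∈ K with 0 ≤ f(t) < 1, and ε > 0. Then there exists ψ ∈ S_{C(K)} with ψ(t) = 1 and ‖f − ψ‖ ≤ 1 − f(t) + ε. -/
theorem stmt18 {K : Type*} [TopologicalSpace K] [CompactSpace K] [T2Space K]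
    (f : C(K, ℝ)) (hf : ‖f‖ = 1) (t : K) (hft : 0 ≤ f t) (hft1 : f t < 1)
    (ε : ℝ) (hε : 0 < ε) :
    ∃ ψ : C(K, ℝ), ‖ψ‖ = 1 ∧ ψ t = 1 ∧ ‖f - ψ‖ ≤ 1 - f t + ε := by
  -- the closed "bad" set where |f s - f t| ≥ ε
  set C : Set K := {s | ε ≤ |f s - f t|} with hC
  have hCclosed : IsClosed C := by
    have : C = (fun s => |f s - f t|) ⁻¹' Set.Ici ε := rfl
    rw [this]
    exact IsClosed.preimage (by continuity) isClosed_Ici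
  have htC : Disjoint C {t} := by
    rw [Set.disjoint_singleton_right]
    simp [hC, hε, abs_lt]
  obtain ⟨φ, hφ0, hφ1, hφmem⟩ :=
    exists_continuous_zero_one_of_isClosed hCclosed isClosed_singleton htC
  have hφt : φ t = 1 := hφ1 rfl
  have hfx : ∀ x, |f x| ≤ 1 := by
    intro x
    have := f.norm_coe_le_norm x
    rwa [hf, Real.norm_eq_abs] at this
  set ψ : C(K, ℝ) := f + φ * (1 - f) with hψ
  have hψx : ∀ x, ψ x = f x + φ x * (1 - f x) := fun x => by simp [hψ]
  have hψt : ψ t = 1 := by rw [hψx, hφt]; ring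
  have hψnorm : ‖ψ‖ = 1 := by
    apply le_antisymm
    · rw [ContinuousMap.norm_le _ zero_le_one]
      intro x
      rw [Real.norm_eq_abs, hψx, abs_le]
      have h1 := (hφmem x).1
      have h2 := (hφmem x).2
      have h3 := abs_le.mp (hfx x)
      constructor <;> nlinarith [h3.1, h3.2]
    · calc (1:ℝ) = ‖ψ t‖ := by rw [hψt]; simp
        _ ≤ ‖ψ‖ := ψ.norm_coe_le_norm t
  refine ⟨ψ, hψnorm, hψt, ?_⟩
  rw [ContinuousMap.norm_le _ (by linarith)]
  intro x
  have hval : (f - ψ) x = -(φ x * (1 - f x)) := by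
    simp [hψ]
  rw [Real.norm_eq_abs, hval, abs_neg]
  have h1 := (hφmem x).1
  have h2 := (hφmem x).2
  have h3 := abs_le.mp (hfx x)
  by_cases hx : ε ≤ |f x - f t|
  · have : φ x = 0 := hφ0 hx
    rw [this]
    simp
    linarith
  · push_neg at hx
    have h4 := abs_lt.mp hx
    rw [abs_of_nonneg (by nlinarith [h3.2])]
    nlinarith [h3.2, h4.1, h4.2]
end

section
/- Let K, Ω be compact Hausdorff spaces, T : S_{C(K)} → S_{C(Ω)} a surjective phase-isometry, and σ : K → Ω the bijection with T(F_t ∪ -F_t) = F_{σ(t)} ∪ -F_{σ(t)} for each t. Then for every f ∈ S_{C(K)}, σ maps {t ∈ K : |f(t)| < 1} onto {s ∈ Ω : |T(f)(s)| < 1}. -/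
theorem stmt19 {K Ω : Type*} [TopologicalSpace K] [CompactSpace K] [T2Space K]
    [TopologicalSpace Ω] [CompactSpace Ω] [T2Space Ω]
    (T : C(K, ℝ) → C(Ω, ℝ))
    (hmap : ∀ f : C(K, ℝ), ‖f‖ = 1 → ‖T f‖ = 1)
    (hsurj : ∀ g : C(Ω, ℝ), ‖g‖ = 1 → ∃ f : C(K, ℝ), ‖f‖ = 1 ∧ T f = g)
    (hphase : ∀ f g : C(K, ℝ), ‖f‖ = 1 → ‖g‖ = 1 →
      ({‖T f + T g‖, ‖T f - T g‖} : Set ℝ) = {‖f + g‖, ‖f - g‖})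
    (σ : K → Ω) (hbij : Function.Bijective σ)
    (hσ : ∀ t : K,
      T '' ({f : C(K, ℝ) | ‖f‖ = 1 ∧ f t = 1} ∪ -{f : C(K, ℝ) | ‖f‖ = 1 ∧ f t = 1}) =
        {g : C(Ω, ℝ) | ‖g‖ = 1 ∧ g (σ t) = 1} ∪
          -{g : C(Ω, ℝ) | ‖g‖ = 1 ∧ g (σ t) = 1}) :
    ∀ f : C(K, ℝ), ‖f‖ = 1 →
      σ '' {t : K | |f t| < 1} = {s : Ω | |T f s| < 1} := by
  intro f hf
  have hTf : ‖T f‖ = 1 := hmap f hf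
  have key : ∀ t : K, |f t| = 1 ↔ |T f (σ t)| = 1 := by
    intro t
    constructor
    · intro h
      have hmem : T f ∈ T '' ({g : C(K, ℝ) | ‖g‖ = 1 ∧ g t = 1} ∪
          -{g : C(K, ℝ) | ‖g‖ = 1 ∧ g t = 1}) := by
        refine ⟨f, ?_, rfl⟩
        rcases (abs_eq (by norm_num : (0:ℝ) ≤ 1)).mp h with h1 | h1
        · exact Or.inl ⟨hf, h1⟩
        · refine Or.inr ?_
          simp only [Set.mem_neg, Set.mem_setOf_eq, norm_neg, ContinuousMap.neg_apply]
          exact ⟨hf, by simp [h1]⟩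
      rw [hσ t] at hmem
      rcases hmem with ⟨_, h1⟩ | hmem
      · rw [h1]; simp
      · simp only [Set.mem_neg, Set.mem_setOf_eq, ContinuousMap.neg_apply] at hmem
        have h2 := hmem.2
        rw [show T f (σ t) = -1 by linarith]
        simp
    · intro h
      have hmem : T f ∈ ({g : C(Ω, ℝ) | ‖g‖ = 1 ∧ g (σ t) = 1} ∪
          -{g : C(Ω, ℝ) | ‖g‖ = 1 ∧ g (σ t) = 1}) := by
        rcases (abs_eq (by norm_num : (0:ℝ) ≤ 1)).mp h with h1 | h1
        · exact Or.inl ⟨hTf, h1⟩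
        · refine Or.inr ?_
          simp only [Set.mem_neg, Set.mem_setOf_eq, norm_neg, ContinuousMap.neg_apply]
          exact ⟨hTf, by simp [h1]⟩
      rw [← hσ t] at hmem
      obtain ⟨g, hg, hTg⟩ := hmem
      have hgnorm : ‖g‖ = 1 := by
        rcases hg with ⟨h1, _⟩ | h1
        · exact h1
        · have := (Set.mem_neg.mp h1).1
          simpa using this
      have hgt : |g t| = 1 := by
        rcases hg with ⟨_, h2⟩ | h1
        · simp [h2]
        · have h2 := (Set.mem_neg.mp h1).2
          simp only [ContinuousMap.neg_apply] at h2
          rw [show g t = -1 by linarith]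
          simp
      have hph := hphase f g hf hgnorm
      have h0 : (0:ℝ) ∈ ({‖f + g‖, ‖f - g‖} : Set ℝ) := by
        rw [← hph]
        right
        simp [hTg]
      rcases h0 with h0 | h0
      · have : f + g = 0 := by
          rw [← norm_eq_zero]; exact h0.symm
        have hfg : f = -g := by
          have := congrArg (fun h => h - g) this
          simpa [add_sub_cancel_right] using this
        rw [show f t = -g t by rw [hfg]; simp]
        simpa using hgt
      · have : f - g = 0 := by
          rw [← norm_eq_zero]
          exact (Set.mem_singleton_iff.mp h0).symm
        have hfg : f = g := by
          have := sub_eq_zero.mp this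
          exact this
        rw [hfg]; exact hgt
  ext s
  constructor
  · rintro ⟨t, ht, rfl⟩
    have hle : |T f (σ t)| ≤ 1 := by
      have := (T f).norm_coe_le_norm (σ t)
      rwa [Real.norm_eq_abs, hTf] at this
    have hne : |T f (σ t)| ≠ 1 := fun h => absurd ((key t).mpr h) (ne_of_lt ht)
    exact lt_of_le_of_ne hle hne
  · intro hs
    obtain ⟨t, rfl⟩ := hbij.2 s
    refine ⟨t, ?_, rfl⟩
    have hle : |f t| ≤ 1 := by
      have := f.norm_coe_le_norm t
      rwa [Real.norm_eq_abs, hf] at this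
    have hne : |f t| ≠ 1 := fun h => absurd ((key t).mp h) (ne_of_lt hs)
    exact lt_of_le_of_ne hle hne
end
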